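/- arXiv:0803.2112 — 4 statements merged into one kernel-verified Lean document; each statement's English description precedes it below -/
import Mathlib

section
/- For every n ≥ 1, τ₃(n)/τ₃(n−1) < 3, i.e., τ₃(n) < 3·τ₃(n−1). -/
open Finset Filter Topology

/-- Cells of a Young diagram given by its list of column lengths:
`(c, r)` means row `r` of column `c`. -/
def Cells (lam : List ℕ) : Set (ℕ × ℕ) :=
  {p | p.1 < lam.length ∧ p.2 < lam.getD p.1 0}

/-- `T` is a standard Young tableau of (column-lengths) shape `lam`:
it is a bijection from the cells onto `{1, …, lam.sum}`, strictly
increasing along each column and each row, and `0` outside the diagram. -/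
def IsSYT (lam : List ℕ) (T : ℕ × ℕ → ℕ) : Prop :=
  Set.BijOn T (Cells lam) (Set.Icc 1 lam.sum) ∧
  (∀ p ∈ Cells lam, ∀ q ∈ Cells lam, p.1 = q.1 → p.2 < q.2 → T p < T q) ∧
  (∀ p ∈ Cells lam, ∀ q ∈ Cells lam, p.2 = q.2 → p.1 < q.1 → T p < T q) ∧
  (∀ p, p ∉ Cells lam → T p = 0)

/-- The number of standard Young tableaux of a fixed column-shape. -/
noncomputable def sytCount (lam : List ℕ) : ℕ :=
  Nat.card {T : ℕ × ℕ → ℕ // IsSYT lam T}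

/-- `tau s n` : the number of standard Young tableaux on `n` cells whose
shape has at most `s` columns. -/
noncomputable def tau (s n : ℕ) : ℕ :=
  Nat.card {p : List ℕ × (ℕ × ℕ → ℕ) //
    p.1.length ≤ s ∧ p.1.Pairwise (· ≥ ·) ∧ (∀ x ∈ p.1, 0 < x) ∧
    p.1.sum = n ∧ IsSYT p.1 p.2}

/-! ### Auxiliary material -/

/-- Abbreviation for the subtype counted by `tau 3 n`. -/
def SpaceM (n : ℕ) := {p : List ℕ × (ℕ × ℕ → ℕ) //
    p.1.length ≤ 3 ∧ p.1.Pairwise (· ≥ ·) ∧ (∀ x ∈ p.1, 0 < x) ∧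
    p.1.sum = n ∧ IsSYT p.1 p.2}

lemma tau_eq_card (n : ℕ) : tau 3 n = Nat.card (SpaceM n) := rfl

lemma set_getD_self (l : List ℕ) (c : ℕ) (h : c < l.length) :
    l.set c (l.getD c 0) = l := by
  apply List.ext_getElem (by simp)
  intro i h1 h2
  rw [List.getElem_set]
  split
  · next heq => subst heq; rw [List.getD_eq_getElem _ _ h]
  · rfl

lemma getD_le_sum (l : List ℕ) (i : ℕ) : l.getD i 0 ≤ l.sum := by
  by_cases h : i < l.length
  · rw [List.getD_eq_getElem _ _ h]
    exact List.single_le_sum (fun x _ => Nat.zero_le x) _ (List.getElem_mem h)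
  · rw [List.getD_eq_default _ _ (by omega)]
    exact Nat.zero_le _

/-- The set of tableaux on `m` cells with at most 3 columns is finite. -/
lemma finite_SpaceM (m : ℕ) : Finite (SpaceM m) := by
  have hb1 : ∀ (x : SpaceM m) (i : ℕ), x.1.1.getD i 0 < m + 1 := by
    intro x i
    have := getD_le_sum x.1.1 i
    rw [x.2.2.2.2.1] at this
    omega
  have hb2 : ∀ (x : SpaceM m) (q : ℕ × ℕ), x.1.2 q < m + 1 := by
    intro x q
    by_cases hq : q ∈ Cells x.1.1
    · have h0 := x.2.2.2.2.2.1.mapsTo hq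
      rw [x.2.2.2.2.1, Set.mem_Icc] at h0
      omega
    · rw [x.2.2.2.2.2.2.2.2 q hq]; omega
  set ψ : SpaceM m → (Fin 4 × (Fin 3 → Fin (m + 1))) × (Fin 3 × Fin (m + 1) → Fin (m + 1)) :=
    fun x => ((⟨x.1.1.length, by have := x.2.1; omega⟩,
               fun i => ⟨x.1.1.getD i 0, hb1 x i⟩),
              fun q => ⟨x.1.2 (q.1, q.2), hb2 x _⟩) with hψ
  apply Finite.of_injective ψ
  intro x y hxy
  rw [hψ] at hxy
  simp only [Prod.mk.injEq] at hxy
  obtain ⟨⟨hlen, hget⟩, hT⟩ := hxy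
  have hlen' : x.1.1.length = y.1.1.length := congrArg Fin.val hlen
  have hL : x.1.1 = y.1.1 := by
    apply List.ext_getElem hlen'
    intro i h1 h2
    have hi3 : i < 3 := lt_of_lt_of_le h1 x.2.1
    have h' : x.1.1.getD i 0 = y.1.1.getD i 0 :=
      congrArg Fin.val (congrFun hget ⟨i, hi3⟩)
    rwa [List.getD_eq_getElem _ _ h1, List.getD_eq_getElem _ _ h2] at h'
  have hTeq : x.1.2 = y.1.2 := by
    funext q
    by_cases hq : q ∈ Cells x.1.1
    · have hq1 : q.1 < 3 := lt_of_lt_of_le hq.1 x.2.1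
      have hq2 : q.2 < m + 1 := by
        have := hq.2
        have := hb1 x q.1
        omega
      have := congrFun hT (⟨q.1, hq1⟩, ⟨q.2, hq2⟩)
      have := congrArg Fin.val this
      simpa using this
    · rw [x.2.2.2.2.2.2.2.2 q hq, y.2.2.2.2.2.2.2.2 q (hL ▸ hq)]
  refine Subtype.ext (Prod.ext hL hTeq)

/-- There is a single-column tableau on `m` cells. -/
lemma exists_column (m : ℕ) : ∃ y : SpaceM m, y.1.1.length ≤ 1 := by
  rcases Nat.eq_zero_or_pos m with hm | hm
  · subst hm
    have hc : Cells ([] : List ℕ) = ∅ := by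
      ext p; simp [Cells]
    refine ⟨⟨([], fun _ => 0), ?_⟩, by simp⟩
    refine ⟨by simp, List.Pairwise.nil, by simp, by simp, ?_, ?_, ?_, ?_⟩
    · have hi : Set.Icc 1 (([] : List ℕ).sum) = ∅ := by simp
      rw [hc, hi]
      exact ⟨Set.mapsTo_empty _ _, Set.injOn_empty _, Set.surjOn_empty _ _⟩
    · intro p hp; rw [hc] at hp; exact absurd hp (Set.notMem_empty p)
    · intro p hp; rw [hc] at hp; exact absurd hp (Set.notMem_empty p)
    · intro p _; rfl
  · refine ⟨⟨([m], fun p => if p.1 = 0 ∧ p.2 < m then p.2 + 1 else 0), ?_⟩, by simp⟩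
    have hcells : Cells [m] = {p : ℕ × ℕ | p.1 = 0 ∧ p.2 < m} := by
      ext p
      simp only [Cells, Set.mem_setOf_eq, List.length_singleton]
      constructor
      · rintro ⟨h1, h2⟩
        have hp1 : p.1 = 0 := by omega
        refine ⟨hp1, by rwa [hp1] at h2⟩
      · rintro ⟨h1, h2⟩
        exact ⟨by omega, by rwa [h1]⟩
    refine ⟨by simp, List.pairwise_singleton _ m, by simpa using hm, by simp, ?_, ?_, ?_, ?_⟩
    · rw [hcells]
      constructor
      · rintro p ⟨h1, h2⟩
        show (if p.1 = 0 ∧ p.2 < m then p.2 + 1 else 0) ∈ Set.Icc 1 ([m].sum)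
        rw [if_pos ⟨h1, h2⟩]
        simp only [List.sum_cons, List.sum_nil, add_zero, Set.mem_Icc]
        omega
      constructor
      · rintro p ⟨hp1, hp2⟩ q ⟨hq1, hq2⟩ h
        have h' : (if p.1 = 0 ∧ p.2 < m then p.2 + 1 else 0)
            = (if q.1 = 0 ∧ q.2 < m then q.2 + 1 else 0) := h
        rw [if_pos ⟨hp1, hp2⟩, if_pos ⟨hq1, hq2⟩] at h'
        exact Prod.ext (hp1.trans hq1.symm) (by omega)
      · intro k hk
        simp only [List.sum_cons, List.sum_nil, add_zero, Set.mem_Icc] at hk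
        refine ⟨(0, k - 1), ⟨rfl, by omega⟩, ?_⟩
        show (if (0 : ℕ) = 0 ∧ k - 1 < m then k - 1 + 1 else 0) = k
        rw [if_pos ⟨rfl, by omega⟩]
        omega
    · rw [hcells]
      rintro p ⟨hp1, hp2⟩ q ⟨hq1, hq2⟩ _ hlt
      show (if p.1 = 0 ∧ p.2 < m then p.2 + 1 else 0)
          < (if q.1 = 0 ∧ q.2 < m then q.2 + 1 else 0)
      rw [if_pos ⟨hp1, hp2⟩, if_pos ⟨hq1, hq2⟩]
      omega
    · rw [hcells]
      rintro p ⟨hp1, _⟩ q ⟨hq1, _⟩ _ hlt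
      omega
    · intro p hp
      rw [hcells] at hp
      exact if_neg (by simpa [Set.mem_setOf_eq] using hp)

lemma isSYT_delete {L lam' : List ℕ} {T : ℕ × ℕ → ℕ} {p₀ : ℕ × ℕ}
    (hsyt : IsSYT L T) (hp₀ : p₀ ∈ Cells L) (hTp₀ : T p₀ = L.sum)
    (hcc : Cells lam' = Cells L \ {p₀}) (hsum' : lam'.sum = L.sum - 1) :
    IsSYT lam' (Function.update T p₀ 0) := by
  obtain ⟨hbij, hcolm, hrowm, hz⟩ := hsyt
  have hupd : ∀ q : ℕ × ℕ, q ≠ p₀ → Function.update T p₀ 0 q = T q :=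
    fun q h => Function.update_of_ne h _ _
  have h1sum : 1 ≤ L.sum := by
    have := hbij.mapsTo hp₀
    rw [Set.mem_Icc] at this
    omega
  refine ⟨?_, ?_, ?_, ?_⟩
  · rw [hcc, hsum']
    refine ⟨?_, ?_, ?_⟩
    · rintro q ⟨hqL, hqne⟩
      simp only [Set.mem_singleton_iff] at hqne
      rw [hupd q hqne]
      have h1 := hbij.mapsTo hqL
      rw [Set.mem_Icc] at h1
      have h2 : T q ≠ L.sum := fun h => hqne (hbij.injOn hqL hp₀ (h.trans hTp₀.symm))
      rw [Set.mem_Icc]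
      exact ⟨h1.1, by omega⟩
    · rintro q1 ⟨h1, hne1⟩ q2 ⟨h2, hne2⟩ h
      simp only [Set.mem_singleton_iff] at hne1 hne2
      rw [hupd q1 hne1, hupd q2 hne2] at h
      exact hbij.injOn h1 h2 h
    · intro k hk
      rw [Set.mem_Icc] at hk
      have hk' : k ∈ Set.Icc 1 L.sum := ⟨hk.1, by omega⟩
      obtain ⟨q, hq, hTq⟩ := hbij.surjOn hk'
      have hne : q ≠ p₀ := by
        rintro rfl
        rw [hTp₀] at hTq
        omega
      exact ⟨q, ⟨hq, hne⟩, by rw [hupd q hne]; exact hTq⟩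
  · rw [hcc]
    rintro p ⟨hpL, hpne⟩ q ⟨hqL, hqne⟩ h1 h2
    simp only [Set.mem_singleton_iff] at hpne hqne
    rw [hupd p hpne, hupd q hqne]
    exact hcolm p hpL q hqL h1 h2
  · rw [hcc]
    rintro p ⟨hpL, hpne⟩ q ⟨hqL, hqne⟩ h1 h2
    simp only [Set.mem_singleton_iff] at hpne hqne
    rw [hupd p hpne, hupd q hqne]
    exact hrowm p hpL q hqL h1 h2
  · intro p hp
    rw [hcc] at hp
    by_cases hpe : p = p₀
    · subst hpe
      exact Function.update_self _ _ _
    · rw [hupd p hpe]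
      apply hz
      intro hmem
      exact hp ⟨hmem, hpe⟩

/-- Reconstruction of the bigger shape from the smaller one and the column index. -/
def recoverL (c : ℕ) (l : List ℕ) : List ℕ :=
  if c = l.length then l ++ [1] else l.set c (l.getD c 0 + 1)


lemma main_step (n : ℕ) (hn : 1 ≤ n) (x : SpaceM n) :
    ∃ (c : Fin 3) (y : SpaceM (n - 1)),
      ((c : ℕ) = 2 → 2 ≤ y.1.1.length) ∧
      x.1.1 = recoverL (c : ℕ) y.1.1 ∧
      x.1.2 = Function.update y.1.2
        ((c : ℕ), (recoverL (c : ℕ) y.1.1).getD (c : ℕ) 0 - 1) n := by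
  obtain ⟨⟨L, T⟩, hlen, hsort, hpos, hsum, hsyt⟩ := x
  dsimp only at hlen hsort hpos hsum hsyt ⊢
  obtain ⟨hbij, hcolm, hrowm, hz⟩ := hsyt
  have hmax : ∀ q ∈ Cells L, T q ≤ n := by
    intro q hq
    have := hbij.mapsTo hq
    rw [Set.mem_Icc, hsum] at this
    exact this.2
  have hnmem : n ∈ Set.Icc 1 L.sum := by rw [hsum]; exact ⟨hn, le_rfl⟩
  obtain ⟨p₀, hp₀, hTp₀⟩ := hbij.surjOn hnmem
  obtain ⟨c, r⟩ := p₀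
  have hp1 : c < L.length := hp₀.1
  have hp2 : r < L.getD c 0 := hp₀.2
  have hc3 : c < 3 := lt_of_lt_of_le hp1 hlen
  have hA : L.getD c 0 = r + 1 := by
    by_contra h
    have h2 : r + 1 < L.getD c 0 := by omega
    have hq : ((c, r + 1) : ℕ × ℕ) ∈ Cells L := ⟨hp1, h2⟩
    have h3 := hcolm (c, r) hp₀ (c, r + 1) hq rfl (Nat.lt_succ_self r)
    have h4 := hmax (c, r + 1) hq
    omega
  have hB : ∀ j, c < j → j < L.length → L.getD j 0 ≤ r := by
    intro j hcj hjl
    by_contra h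
    have hq : ((j, r) : ℕ × ℕ) ∈ Cells L := ⟨hjl, by show r < L.getD j 0; omega⟩
    have h1 := hrowm (c, r) hp₀ (j, r) hq rfl hcj
    have h2 := hmax (j, r) hq
    omega
  rcases Nat.eq_zero_or_pos r with hr | hr
  · -- the cell with n is alone in the last column
    subst hr
    have hclast : L.length = c + 1 := by
      by_contra h
      have h1 : c + 1 < L.length := by omega
      have h2 := hB (c + 1) (Nat.lt_succ_self c) h1
      have h3 : 0 < L.getD (c + 1) 0 := by
        rw [List.getD_eq_getElem _ _ h1]
        exact hpos _ (List.getElem_mem h1)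
      omega
    have hLne : L ≠ [] := by
      intro h
      rw [h] at hp1
      exact absurd hp1 (by simp)
    have hlast1 : L.getLast hLne = 1 := by
      rw [List.getLast_eq_getElem, ← List.getD_eq_getElem _ 0 (by omega : L.length - 1 < L.length)]
      have he : L.length - 1 = c := by omega
      rw [he, hA]
    have hLdec : L.dropLast ++ [1] = L := by
      conv_rhs => rw [← List.dropLast_concat_getLast hLne]
      rw [hlast1]
    have hlen' : L.dropLast.length = c := by
      rw [List.length_dropLast]; omega
    have hsum' : L.dropLast.sum = n - 1 := by
      have h5 : L.sum = L.dropLast.sum + 1 := by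
        conv_lhs => rw [← hLdec]
        rw [List.sum_append]
        simp
      omega
    have hcc : Cells L.dropLast = Cells L \ {(c, 0)} := by
      ext q
      simp only [Cells, Set.mem_setOf_eq, Set.mem_diff, Set.mem_singleton_iff,
        List.length_dropLast, Prod.ext_iff]
      constructor
      · rintro ⟨h1, h2⟩
        have h1' : q.1 < L.length := by omega
        have h1'' : q.1 < L.dropLast.length := by rw [List.length_dropLast]; exact h1
        have hgd : L.dropLast.getD q.1 0 = L.getD q.1 0 := by
          rw [List.getD_eq_getElem _ _ h1'', List.getElem_dropLast,
            List.getD_eq_getElem _ _ h1']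
        refine ⟨⟨by omega, by rw [← hgd]; exact h2⟩, ?_⟩
        rintro ⟨hq1, hq2⟩
        omega
      · rintro ⟨⟨h1, h2⟩, hne⟩
        have hq1 : q.1 ≤ c := by omega
        rcases Nat.lt_or_ge q.1 c with hlt | hge
        · have h1'' : q.1 < L.dropLast.length := by rw [List.length_dropLast]; omega
          have hgd : L.dropLast.getD q.1 0 = L.getD q.1 0 := by
            rw [List.getD_eq_getElem _ _ h1'', List.getElem_dropLast,
              List.getD_eq_getElem _ _ (by omega : q.1 < L.length)]
          exact ⟨by omega, by rw [hgd]; exact h2⟩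
        · exfalso
          have hqc : q.1 = c := by omega
          rw [hqc, hA] at h2
          exact hne ⟨hqc, by omega⟩
    have hTp₀' : T (c, 0) = L.sum := by rw [hsum]; exact hTp₀
    have hsum'' : L.dropLast.sum = L.sum - 1 := by rw [hsum]; exact hsum'
    refine ⟨⟨c, hc3⟩, ⟨(L.dropLast, Function.update T (c, 0) 0),
      by rw [List.length_dropLast]; omega,
      hsort.sublist (List.dropLast_sublist L),
      fun z hz' => hpos z ((List.dropLast_sublist L).subset hz'),
      hsum',
      isSYT_delete ⟨hbij, hcolm, hrowm, hz⟩ hp₀ hTp₀' hcc hsum''⟩, ?_, ?_, ?_⟩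
    · intro h
      have hc2 : c = 2 := h
      show 2 ≤ L.dropLast.length
      omega
    · show L = recoverL c L.dropLast
      rw [recoverL, if_pos hlen'.symm, hLdec]
    · show T = Function.update (Function.update T (c, 0) 0)
        (c, (recoverL c L.dropLast).getD c 0 - 1) n
      have hrec : recoverL c L.dropLast = L := by
        rw [recoverL, if_pos hlen'.symm, hLdec]
      rw [hrec]
      have hpt : L.getD c 0 - 1 = 0 := by omega
      rw [hpt, Function.update_idem, ← hTp₀, Function.update_eq_self]
  · -- the cell with n is at the bottom of a column of height r + 1 ≥ 2
    set lam' := L.set c r with hlam'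
    have hlenset : lam'.length = L.length := by rw [hlam', List.length_set]
    have hgdc : lam'.getD c 0 = r := by
      rw [List.getD_eq_getElem _ _ (by omega : c < lam'.length)]
      simp [hlam', List.getElem_set]
    have hgdj : ∀ j, j ≠ c → lam'.getD j 0 = L.getD j 0 := by
      intro j hj
      by_cases hjl : j < L.length
      · rw [List.getD_eq_getElem _ _ (by omega : j < lam'.length)]
        simp only [hlam', List.getElem_set, if_neg (fun h : c = j => hj h.symm)]
        rw [← List.getD_eq_getElem _ _ hjl]
      · rw [List.getD_eq_default _ _ (by omega), List.getD_eq_default _ _ (by omega)]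
    have hsortL : ∀ i j (hi : i < L.length) (hj : j < L.length), i < j → L[j] ≤ L[i] := by
      intro i j hi hj hij
      exact List.pairwise_iff_getElem.mp hsort i j hi hj hij
    have hsort' : lam'.Pairwise (· ≥ ·) := by
      apply List.pairwise_iff_getElem.mpr
      intro i j hi hj hij
      have hi' : i < L.length := by omega
      have hj' : j < L.length := by omega
      show lam'[i] ≥ lam'[j]
      simp only [hlam', List.getElem_set]
      split_ifs with h1 h2 h2
      · omega
      · -- c = i, so j > c : L[j] ≤ r
        have := hB j (by omega) hj'
        rw [List.getD_eq_getElem _ _ hj'] at this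
        omega
      · -- c = j, i < c : r ≤ L[i]
        have h3 := hsortL i c hi' hp1 (by omega)
        have h4 : L[c] = r + 1 := by rw [← List.getD_eq_getElem _ 0 hp1]; exact hA
        omega
      · exact hsortL i j hi' hj' hij
    have hpos' : ∀ z ∈ lam', 0 < z := by
      intro z hz'
      rcases List.mem_or_eq_of_mem_set hz' with h | h
      · exact hpos z h
      · omega
    have e1 : L.sum = (L.take c).sum + (r + 1) + (L.drop (c + 1)).sum := by
      conv_lhs => rw [← set_getD_self L c hp1]
      rw [List.sum_set, if_pos hp1, hA]
    have e2 : lam'.sum = (L.take c).sum + r + (L.drop (c + 1)).sum := by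
      rw [hlam', List.sum_set, if_pos hp1]
    have hsum' : lam'.sum = n - 1 := by omega
    have hcc : Cells lam' = Cells L \ {(c, r)} := by
      ext q
      simp only [Cells, Set.mem_setOf_eq, Set.mem_diff, Set.mem_singleton_iff,
        Prod.ext_iff, hlenset]
      constructor
      · rintro ⟨h1, h2⟩
        by_cases hqc : q.1 = c
        · rw [hqc, hgdc] at h2
          refine ⟨⟨h1, by rw [hqc, hA]; omega⟩, ?_⟩
          rintro ⟨hq1, hq2⟩
          omega
        · rw [hgdj q.1 hqc] at h2
          exact ⟨⟨h1, h2⟩, fun h => hqc h.1⟩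
      · rintro ⟨⟨h1, h2⟩, hne⟩
        by_cases hqc : q.1 = c
        · rw [hqc, hA] at h2
          have hq2 : q.2 ≠ r := fun h => hne ⟨hqc, h⟩
          exact ⟨h1, by rw [hqc, hgdc]; omega⟩
        · exact ⟨h1, by rw [hgdj q.1 hqc]; exact h2⟩
    have hTp₀' : T (c, r) = L.sum := by rw [hsum]; exact hTp₀
    have hsum'' : lam'.sum = L.sum - 1 := by rw [hsum]; exact hsum'
    have hrec : recoverL c lam' = L := by
      rw [recoverL, if_neg (by omega : ¬ c = lam'.length), hgdc, hlam', List.set_set,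
        ← hA, set_getD_self L c hp1]
    refine ⟨⟨c, hc3⟩, ⟨(lam', Function.update T (c, r) 0),
      by show lam'.length ≤ 3; omega,
      hsort',
      hpos',
      hsum',
      isSYT_delete ⟨hbij, hcolm, hrowm, hz⟩ hp₀ hTp₀' hcc hsum''⟩, ?_, ?_, ?_⟩
    · intro h
      have hc2 : c = 2 := h
      show 2 ≤ lam'.length
      omega
    · show L = recoverL c lam'
      exact hrec.symm
    · show T = Function.update (Function.update T (c, r) 0)
        (c, (recoverL c lam').getD c 0 - 1) n
      rw [hrec]
      have hpt : L.getD c 0 - 1 = r := by omega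
      rw [hpt, Function.update_idem, ← hTp₀, Function.update_eq_self]

theorem stmt10 (n : ℕ) (hn : 1 ≤ n) : tau 3 n < 3 * tau 3 (n - 1) := by
  haveI h1 : Finite (SpaceM n) := finite_SpaceM n
  haveI h2 : Finite (SpaceM (n - 1)) := finite_SpaceM (n - 1)
  obtain ⟨y₀, hy₀⟩ := exists_column (n - 1)
  choose cf yf hprop hL hT using main_step n hn
  set f : SpaceM n → Fin 3 × SpaceM (n - 1) := fun x => (cf x, yf x) with hf
  have hinj : Function.Injective f := by
    intro a b hab
    rw [hf] at hab
    simp only [Prod.mk.injEq] at hab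
    obtain ⟨e1, e2⟩ := hab
    apply Subtype.ext
    apply Prod.ext
    · rw [hL a, hL b, e1, e2]
    · rw [hT a, hT b, e1, e2]
  have hnotmem : ((⟨2, by norm_num⟩ : Fin 3), y₀) ∉ Set.range f := by
    rintro ⟨x, hx⟩
    rw [hf] at hx
    simp only [Prod.mk.injEq] at hx
    have hcx : (cf x : ℕ) = 2 := by rw [hx.1]
    have h3 := hprop x hcx
    rw [hx.2] at h3
    omega
  haveI := Fintype.ofFinite (SpaceM n)
  haveI := Fintype.ofFinite (SpaceM (n - 1))
  have hcard := Fintype.card_lt_of_injective_of_notMem f hinj hnotmem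
  rw [tau_eq_card, tau_eq_card, Nat.card_eq_fintype_card, Nat.card_eq_fintype_card]
  calc Fintype.card (SpaceM n) < Fintype.card (Fin 3 × SpaceM (n - 1)) := hcard
    _ = 3 * Fintype.card (SpaceM (n - 1)) := by rw [Fintype.card_prod, Fintype.card_fin]
end

section
/- For s ≥ 4 and n ≥ s, γ^{(s)}(n,0) = (s−2)·γ^{(s)}(n−1,0) + γ^{(s)}(n−1,1) − Σ_{j=3}^{s−1} r_j^{(s)}(n−1,0). -/
open Finset Filter Topology

/-- Standard Young tableaux on `n` cells, with at most `s` columns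
(column lengths positive and weakly decreasing), such that the difference
between the lengths of the second and third columns equals `i`. -/
def Y (s n i : ℕ) : Set (List ℕ × (ℕ × ℕ → ℕ)) :=
  {p | p.1.length ≤ s ∧ p.1.Pairwise (· ≥ ·) ∧ (∀ x ∈ p.1, 0 < x) ∧
       p.1.sum = n ∧ p.1.getD 1 0 - p.1.getD 2 0 = i ∧ IsSYT p.1 p.2}

/-- `gamma s n i = |Y s n i|`. -/
noncomputable def gamma (s n i : ℕ) : ℕ := Nat.card (Y s n i)

/-- `rj s j m i` : the number of standard Young tableaux on `m` cells with at
most `s` columns whose second and third column lengths differ by `i`, and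
whose `j`-th and `(j+1)`-th columns have the same length. -/
noncomputable def rj (s j m i : ℕ) : ℕ :=
  Nat.card {p : List ℕ × (ℕ × ℕ → ℕ) //
    p ∈ Y s m i ∧ p.1.getD (j - 1) 0 = p.1.getD j 0}

namespace Aux13

/-! ### getD basics -/

lemma getD_drop' (l : List ℕ) (i j : ℕ) : (l.drop i).getD j 0 = l.getD (i+j) 0 := by
  rw [List.getD_eq_getElem?_getD, List.getElem?_drop, List.getD_eq_getElem?_getD]

lemma getD_take' (l : List ℕ) (i j : ℕ) (h : j < i) : (l.take i).getD j 0 = l.getD j 0 := by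
  rw [List.getD_eq_getElem?_getD, List.getElem?_take, if_pos h, List.getD_eq_getElem?_getD]

lemma getD_anti {lam : List ℕ} (hs : lam.Pairwise (· ≥ ·)) {k j : ℕ} (h : k ≤ j) :
    lam.getD j 0 ≤ lam.getD k 0 := by
  rcases Nat.lt_or_ge j lam.length with hj | hj
  · have hk : k < lam.length := lt_of_le_of_lt h hj
    rcases eq_or_lt_of_le h with rfl | hkj
    · exact le_refl _
    · rw [List.getD_eq_getElem _ _ hj, List.getD_eq_getElem _ _ hk]
      exact List.pairwise_iff_getElem.mp hs k j hk hj hkj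
  · rw [List.getD_eq_default _ _ hj]; exact Nat.zero_le _

lemma sorted_of_succ {lam : List ℕ} (h : ∀ k, lam.getD (k+1) 0 ≤ lam.getD k 0) :
    lam.Pairwise (· ≥ ·) := by
  have anti : Antitone (fun k => lam.getD k 0) := antitone_nat_of_succ_le h
  rw [List.pairwise_iff_getElem]
  intro i j hi hj hij
  have h2 := anti (le_of_lt hij)
  beta_reduce at h2
  rwa [List.getD_eq_getElem _ _ hj, List.getD_eq_getElem _ _ hi] at h2

lemma lt_length_of_getD_pos {lam : List ℕ} {k : ℕ} (h : 0 < lam.getD k 0) :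
    k < lam.length := by
  by_contra hk
  rw [List.getD_eq_default _ _ (le_of_not_gt hk)] at h
  exact absurd h (lt_irrefl 0)

lemma getD_pos_of_lt_length {lam : List ℕ} (hpos : ∀ x ∈ lam, 0 < x) {k : ℕ}
    (h : k < lam.length) : 0 < lam.getD k 0 := by
  rw [List.getD_eq_getElem _ _ h]
  exact hpos _ (List.getElem_mem h)

lemma eq_of_getD {l1 l2 : List ℕ} (h1 : ∀ x ∈ l1, 0 < x) (h2 : ∀ x ∈ l2, 0 < x)
    (h : ∀ k, l1.getD k 0 = l2.getD k 0) : l1 = l2 := by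
  have hlen : l1.length = l2.length := by
    by_contra hne
    rcases Nat.lt_or_ge l1.length l2.length with hl | hl
    · have hp := getD_pos_of_lt_length h2 hl
      rw [← h] at hp
      rw [List.getD_eq_default _ _ (le_refl _)] at hp
      exact absurd hp (lt_irrefl 0)
    · rcases lt_or_eq_of_le hl with hl | hl
      · have hp := getD_pos_of_lt_length h1 hl
        rw [h] at hp
        rw [List.getD_eq_default _ _ (le_refl _)] at hp
        exact absurd hp (lt_irrefl 0)
      · exact hne hl.symm
  apply List.ext_getElem hlen
  intro k hk1 hk2
  have hk := h k
  rwa [List.getD_eq_getElem _ _ hk1, List.getD_eq_getElem _ _ hk2] at hk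

lemma cells_eq (lam : List ℕ) : Cells lam = {p | p.2 < lam.getD p.1 0} := by
  ext ⟨a, b⟩
  constructor
  · rintro ⟨-, h2⟩; exact h2
  · intro h; exact ⟨lt_length_of_getD_pos (lt_of_le_of_lt (Nat.zero_le _) h), h⟩

/-! ### insertion and removal -/

def ins (lam : List ℕ) (c : ℕ) : List ℕ :=
  lam.take c ++ [lam.getD c 0 + 1] ++ lam.drop (c+1)

def rem (lam : List ℕ) (c : ℕ) : List ℕ :=
  lam.take c ++ (if lam.getD c 0 ≤ 1 then [] else [lam.getD c 0 - 1]) ++ lam.drop (c+1)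

lemma getD_ins {lam : List ℕ} {c : ℕ} (hcl : c ≤ lam.length) (k : ℕ) :
    (ins lam c).getD k 0 = lam.getD k 0 + if k = c then 1 else 0 := by
  have hlt : (lam.take c).length = c := by
    rw [List.length_take]; omega
  rcases lt_trichotomy k c with h | rfl | h
  · rw [ins, List.append_assoc, List.getD_append _ _ _ _ (by omega),
      getD_take' _ _ _ h, if_neg (by omega)]
    omega
  · rw [ins, List.append_assoc, List.getD_append_right _ _ _ _ (by omega), hlt,
      Nat.sub_self, if_pos rfl]
    simp
  · rw [ins, List.append_assoc, List.getD_append_right _ _ _ _ (by omega), hlt]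
    have h1 : k - c = (k - c - 1) + 1 := by omega
    rw [h1]
    have h2 : ([lam.getD c 0 + 1] ++ lam.drop (c+1)).getD ((k - c - 1) + 1) 0
        = (lam.drop (c+1)).getD (k - c - 1) 0 := by
      rw [List.getD_append_right _ _ _ _ (by simp)]
      simp
    rw [h2, getD_drop', if_neg (by omega)]
    have h3 : c + 1 + (k - c - 1) = k := by omega
    rw [h3]
    omega

lemma length_ins {lam : List ℕ} {c : ℕ} (hcl : c ≤ lam.length) :
    (ins lam c).length = max lam.length (c+1) := by
  simp [ins]
  omega

lemma sum_ins {lam : List ℕ} {c : ℕ} (hcl : c ≤ lam.length) :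
    (ins lam c).sum = lam.sum + 1 := by
  have hsplit := List.sum_take_add_sum_drop lam c
  rcases lt_or_eq_of_le hcl with h | h
  · have hdrop : lam.drop c = lam[c] :: lam.drop (c+1) := List.drop_eq_getElem_cons h
    have hget : lam.getD c 0 = lam[c] := List.getD_eq_getElem _ _ h
    rw [hdrop, List.sum_cons] at hsplit
    rw [ins]
    simp only [List.sum_append, List.sum_cons, List.sum_nil]
    omega
  · have htake : lam.take c = lam := List.take_of_length_le (le_of_eq h.symm)
    have hdrop : lam.drop (c+1) = [] := List.drop_eq_nil_of_le (by omega)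
    have hget : lam.getD c 0 = 0 := List.getD_eq_default _ _ (le_of_eq h.symm)
    rw [ins, htake, hdrop, hget]
    simp

lemma pos_ins {lam : List ℕ} {c : ℕ} (hpos : ∀ x ∈ lam, 0 < x) :
    ∀ x ∈ ins lam c, 0 < x := by
  intro x hx
  rw [ins] at hx
  simp only [List.mem_append, List.mem_singleton] at hx
  rcases hx with (hx | rfl) | hx
  · exact hpos _ (List.mem_of_mem_take hx)
  · omega
  · exact hpos _ (List.mem_of_mem_drop hx)

lemma sorted_ins {lam : List ℕ} {c : ℕ} (hsort : lam.Pairwise (· ≥ ·))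
    (hcl : c ≤ lam.length) (hadd : c = 0 ∨ lam.getD c 0 < lam.getD (c-1) 0) :
    (ins lam c).Pairwise (· ≥ ·) := by
  apply sorted_of_succ
  intro k
  rw [getD_ins hcl, getD_ins hcl]
  have ha := getD_anti hsort (show k ≤ k + 1 by omega)
  rcases eq_or_ne (k+1) c with rfl | h1
  · have hlt : lam.getD (k+1) 0 < lam.getD k 0 := by
      rcases hadd with h0 | hlt
      · omega
      · simpa using hlt
    rw [if_pos rfl, if_neg (by omega)]
    omega
  · rcases eq_or_ne k c with rfl | h2
    · rw [if_neg h1, if_pos rfl]; omega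
    · rw [if_neg h1, if_neg h2]; omega

lemma cells_ins {lam : List ℕ} {c : ℕ} (hcl : c ≤ lam.length) :
    Cells (ins lam c) = insert (c, lam.getD c 0) (Cells lam) := by
  ext ⟨a, b⟩
  simp only [cells_eq, Set.mem_setOf_eq, Set.mem_insert_iff, Prod.mk.injEq]
  rw [getD_ins hcl]
  rcases eq_or_ne a c with rfl | h
  · rw [if_pos rfl]
    constructor
    · intro hb; omega
    · intro hb; omega
  · rw [if_neg h]
    constructor
    · intro hb; right; omega
    · rintro (⟨h1, h2⟩ | hb)
      · exact absurd h1 h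
      · omega

lemma isSYT_ins {lam : List ℕ} {T : ℕ × ℕ → ℕ} {c : ℕ}
    (hsort : lam.Pairwise (· ≥ ·)) (hcl : c ≤ lam.length) (hT : IsSYT lam T) :
    IsSYT (ins lam c) (fun q => if q = (c, lam.getD c 0) then lam.sum + 1 else T q) := by
  obtain ⟨hbij, hcol, hrow, hzero⟩ := hT
  have hq0 : (c, lam.getD c 0) ∉ Cells lam := by
    rw [cells_eq]
    simp only [Set.mem_setOf_eq]
    exact lt_irrefl _
  have hcells := cells_ins (lam := lam) (c := c) hcl
  have hsum := sum_ins (lam := lam) (c := c) hcl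
  have hval : ∀ p ∈ Cells lam, 1 ≤ T p ∧ T p ≤ lam.sum := by
    intro p hp
    have := hbij.mapsTo hp
    simpa using this
  have hne : ∀ p ∈ Cells lam, p ≠ (c, lam.getD c 0) := fun p hp h => hq0 (h ▸ hp)
  refine ⟨?_, ?_, ?_, ?_⟩
  · rw [hcells, hsum]
    refine ⟨?_, ?_, ?_⟩
    · intro p hp
      rcases Set.mem_insert_iff.mp hp with rfl | hp
      · beta_reduce
        rw [if_pos rfl]
        exact Set.mem_Icc.mpr ⟨by omega, le_refl _⟩
      · beta_reduce
        rw [if_neg (hne p hp)]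
        have := hval p hp
        exact Set.mem_Icc.mpr ⟨this.1, by omega⟩
    · intro p hp q hq heq
      beta_reduce at heq
      rcases Set.mem_insert_iff.mp hp with rfl | hp <;>
        rcases Set.mem_insert_iff.mp hq with rfl | hq
      · rfl
      · exfalso
        rw [if_pos rfl, if_neg (hne q hq)] at heq
        have := hval q hq; omega
      · exfalso
        rw [if_neg (hne p hp), if_pos rfl] at heq
        have := hval p hp; omega
      · rw [if_neg (hne p hp), if_neg (hne q hq)] at heq
        exact hbij.injOn hp hq heq
    · intro v hv
      rw [Set.mem_Icc] at hv
      rcases eq_or_lt_of_le hv.2 with hv2 | hv2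
      · refine ⟨(c, lam.getD c 0), Set.mem_insert _ _, ?_⟩
        beta_reduce
        rw [if_pos rfl]
        omega
      · have hv' : v ∈ Set.Icc 1 lam.sum := Set.mem_Icc.mpr ⟨hv.1, by omega⟩
        obtain ⟨p, hp, hpv⟩ := hbij.surjOn hv'
        refine ⟨p, Set.mem_insert_of_mem _ hp, ?_⟩
        beta_reduce
        rw [if_neg (hne p hp)]
        exact hpv
  · intro p hp q hq h1 h2
    rw [hcells] at hp hq
    beta_reduce
    rcases Set.mem_insert_iff.mp hq with rfl | hq
    · rcases Set.mem_insert_iff.mp hp with rfl | hp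
      · exact absurd h2 (lt_irrefl _)
      · rw [if_pos rfl, if_neg (hne p hp)]
        have := hval p hp; omega
    · rcases Set.mem_insert_iff.mp hp with rfl | hp
      · exfalso
        have hq2 : q.2 < lam.getD q.1 0 := hq.2
        have h1' : c = q.1 := h1
        have h2' : lam.getD c 0 < q.2 := h2
        rw [← h1'] at hq2
        omega
      · rw [if_neg (hne p hp), if_neg (hne q hq)]
        exact hcol p hp q hq h1 h2
  · intro p hp q hq h1 h2
    rw [hcells] at hp hq
    beta_reduce
    rcases Set.mem_insert_iff.mp hq with rfl | hq
    · rcases Set.mem_insert_iff.mp hp with rfl | hp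
      · exact absurd h2 (lt_irrefl _)
      · rw [if_pos rfl, if_neg (hne p hp)]
        have := hval p hp; omega
    · rcases Set.mem_insert_iff.mp hp with rfl | hp
      · exfalso
        have hq2 : q.2 < lam.getD q.1 0 := hq.2
        have h1' : lam.getD c 0 = q.2 := h1
        have h2' : c < q.1 := h2
        have ha := getD_anti hsort (le_of_lt h2')
        omega
      · rw [if_neg (hne p hp), if_neg (hne q hq)]
        exact hrow p hp q hq h1 h2
  · intro p hp
    rw [hcells, Set.mem_insert_iff] at hp
    push_neg at hp
    beta_reduce
    rw [if_neg hp.1]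
    exact hzero p hp.2

lemma getD_rem {mu : List ℕ} {c : ℕ} (hsort : mu.Pairwise (· ≥ ·)) (hpos : ∀ x ∈ mu, 0 < x)
    (hcorner : mu.getD (c+1) 0 < mu.getD c 0) (k : ℕ) :
    (rem mu c).getD k 0 = mu.getD k 0 - if k = c then 1 else 0 := by
  have hc : c < mu.length := lt_length_of_getD_pos (by omega)
  have hlt : (mu.take c).length = c := by rw [List.length_take]; omega
  by_cases hone : mu.getD c 0 ≤ 1
  · have h1 : mu.getD c 0 = 1 := by
      have := getD_pos_of_lt_length hpos hc; omega
    have hlen : mu.length ≤ c + 1 := by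
      by_contra hh
      have := getD_pos_of_lt_length hpos (show c+1 < mu.length by omega)
      omega
    have hdrop : mu.drop (c+1) = [] := List.drop_eq_nil_of_le hlen
    rw [rem, if_pos hone, hdrop]
    simp only [List.append_nil]
    rcases lt_trichotomy k c with h | rfl | h
    · rw [getD_take' _ _ _ h, if_neg (by omega)]; omega
    · rw [List.getD_eq_default _ _ (by omega), if_pos rfl]; omega
    · rw [List.getD_eq_default _ _ (by omega), if_neg (by omega)]
      have h2 : mu.getD k 0 = 0 := List.getD_eq_default _ _ (by omega)
      omega
  · rw [rem, if_neg hone]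
    rcases lt_trichotomy k c with h | rfl | h
    · rw [List.append_assoc, List.getD_append _ _ _ _ (by omega), getD_take' _ _ _ h,
        if_neg (by omega)]
      omega
    · rw [List.append_assoc, List.getD_append_right _ _ _ _ (by omega), hlt, Nat.sub_self,
        if_pos rfl]
      simp
    · rw [List.append_assoc, List.getD_append_right _ _ _ _ (by omega), hlt]
      have h1 : k - c = (k - c - 1) + 1 := by omega
      rw [h1]
      have h2 : ([mu.getD c 0 - 1] ++ mu.drop (c+1)).getD ((k-c-1)+1) 0
          = (mu.drop (c+1)).getD (k-c-1) 0 := by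
        rw [List.getD_append_right _ _ _ _ (by simp)]
        simp
      rw [h2, getD_drop', if_neg (by omega)]
      have h3 : c + 1 + (k - c - 1) = k := by omega
      rw [h3]
      omega

lemma length_rem_le (mu : List ℕ) (c : ℕ) : (rem mu c).length ≤ mu.length := by
  rw [rem]
  rcases Nat.lt_or_ge c mu.length with h | h
  · split <;> simp <;> omega
  · have h1 : mu.getD c 0 = 0 := List.getD_eq_default _ _ h
    rw [if_pos (by omega)]
    simp
    omega

lemma le_length_rem {mu : List ℕ} {c : ℕ} (h : c < mu.length) :
    c ≤ (rem mu c).length := by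
  rw [rem]
  split <;> simp <;> omega

lemma sum_rem {mu : List ℕ} {c : ℕ} (hpos : ∀ x ∈ mu, 0 < x) (hc : c < mu.length) :
    (rem mu c).sum + 1 = mu.sum := by
  have hsplit := List.sum_take_add_sum_drop mu c
  have hdrop : mu.drop c = mu[c] :: mu.drop (c+1) := List.drop_eq_getElem_cons hc
  have hget : mu.getD c 0 = mu[c] := List.getD_eq_getElem _ _ hc
  have hpc : 0 < mu[c] := hpos _ (List.getElem_mem hc)
  rw [hdrop, List.sum_cons] at hsplit
  rw [rem]
  split
  · next hone =>
    simp only [List.append_nil, List.sum_append, List.sum_nil]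
    omega
  · next hone =>
    simp only [List.sum_append, List.sum_cons, List.sum_nil]
    omega

lemma pos_rem {mu : List ℕ} {c : ℕ} (hpos : ∀ x ∈ mu, 0 < x) :
    ∀ x ∈ rem mu c, 0 < x := by
  intro x hx
  rw [rem] at hx
  simp only [List.mem_append] at hx
  rcases hx with (hx | hx) | hx
  · exact hpos _ (List.mem_of_mem_take hx)
  · split at hx
    · simp at hx
    · next hone =>
      simp only [List.mem_singleton] at hx
      omega
  · exact hpos _ (List.mem_of_mem_drop hx)

lemma sorted_rem {mu : List ℕ} {c : ℕ} (hsort : mu.Pairwise (· ≥ ·))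
    (hpos : ∀ x ∈ mu, 0 < x) (hcorner : mu.getD (c+1) 0 < mu.getD c 0) :
    (rem mu c).Pairwise (· ≥ ·) := by
  apply sorted_of_succ
  intro k
  rw [getD_rem hsort hpos hcorner, getD_rem hsort hpos hcorner]
  have ha := getD_anti hsort (show k ≤ k + 1 by omega)
  rcases eq_or_ne (k+1) c with rfl | h1
  · rw [if_pos rfl, if_neg (by omega)]
    omega
  · rcases eq_or_ne k c with rfl | h2
    · rw [if_neg h1, if_pos rfl]
      omega
    · rw [if_neg h1, if_neg h2]
      omega

lemma isSYT_del {mu lam : List ℕ} {U : ℕ × ℕ → ℕ} {q : ℕ × ℕ}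
    (hU : IsSYT mu U) (hq : q ∈ Cells mu) (hqv : U q = mu.sum)
    (hcells : Cells lam = Cells mu \ {q}) (hsum : lam.sum + 1 = mu.sum) :
    IsSYT lam (fun p => if p = q then 0 else U p) := by
  obtain ⟨hbij, hcol, hrow, hzero⟩ := hU
  have hval : ∀ p ∈ Cells mu, 1 ≤ U p ∧ U p ≤ mu.sum := by
    intro p hp
    have := hbij.mapsTo hp
    simpa using this
  refine ⟨?_, ?_, ?_, ?_⟩
  · rw [hcells]
    refine ⟨?_, ?_, ?_⟩
    · rintro p ⟨hp, hpq⟩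
      simp only [Set.mem_singleton_iff] at hpq
      beta_reduce
      rw [if_neg hpq]
      have h1 := hval p hp
      have hne : U p ≠ mu.sum := fun h => hpq (hbij.injOn hp hq (h.trans hqv.symm))
      exact Set.mem_Icc.mpr ⟨h1.1, by omega⟩
    · rintro p ⟨hp, hpq⟩ r ⟨hr, hrq⟩ h
      simp only [Set.mem_singleton_iff] at hpq hrq
      beta_reduce at h
      rw [if_neg hpq, if_neg hrq] at h
      exact hbij.injOn hp hr h
    · intro v hv
      rw [Set.mem_Icc] at hv
      have hv' : v ∈ Set.Icc 1 mu.sum := Set.mem_Icc.mpr ⟨hv.1, by omega⟩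
      obtain ⟨p, hp, hpv⟩ := hbij.surjOn hv'
      have hpq : p ≠ q := by
        intro hh
        subst hh
        omega
      exact ⟨p, ⟨hp, hpq⟩, by beta_reduce; rw [if_neg hpq]; exact hpv⟩
  · intro p hp r hr h1 h2
    rw [hcells] at hp hr
    simp only [Set.mem_diff, Set.mem_singleton_iff] at hp hr
    beta_reduce
    rw [if_neg hp.2, if_neg hr.2]
    exact hcol p hp.1 r hr.1 h1 h2
  · intro p hp r hr h1 h2
    rw [hcells] at hp hr
    simp only [Set.mem_diff, Set.mem_singleton_iff] at hp hr
    beta_reduce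
    rw [if_neg hp.2, if_neg hr.2]
    exact hrow p hp.1 r hr.1 h1 h2
  · intro p hp
    rw [hcells] at hp
    simp only [Set.mem_diff, Set.mem_singleton_iff, not_and, not_not] at hp
    by_cases hpq : p = q
    · beta_reduce
      rw [if_pos hpq]
    · beta_reduce
      rw [if_neg hpq]
      apply hzero
      intro hmem
      exact hpq (hp hmem)

lemma max_bottom {mu : List ℕ} {U : ℕ × ℕ → ℕ} {q : ℕ × ℕ}
    (hU : IsSYT mu U) (hq : q ∈ Cells mu) (hqv : U q = mu.sum) :
    mu.getD q.1 0 = q.2 + 1 := by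
  obtain ⟨hbij, hcol, -, -⟩ := hU
  have h1 : q.2 < mu.getD q.1 0 := hq.2
  by_contra h
  have h2 : q.2 + 1 < mu.getD q.1 0 := by omega
  have hq' : (q.1, q.2 + 1) ∈ Cells mu := ⟨hq.1, h2⟩
  have hlt := hcol q hq (q.1, q.2+1) hq' rfl (Nat.lt_succ_self _)
  have hle := (Set.mem_Icc.mp (hbij.mapsTo hq')).2
  omega

lemma max_corner {mu : List ℕ} {U : ℕ × ℕ → ℕ} {q : ℕ × ℕ}
    (hsort : mu.Pairwise (· ≥ ·)) (hU : IsSYT mu U) (hq : q ∈ Cells mu)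
    (hqv : U q = mu.sum) : mu.getD (q.1+1) 0 < mu.getD q.1 0 := by
  obtain ⟨hbij, -, hrow, -⟩ := hU
  have ha := getD_anti hsort (show q.1 ≤ q.1 + 1 by omega)
  by_contra h
  have heq : mu.getD (q.1+1) 0 = mu.getD q.1 0 := by omega
  have hq' : (q.1+1, q.2) ∈ Cells mu := by
    rw [cells_eq]
    show q.2 < mu.getD (q.1+1) 0
    rw [heq]
    exact hq.2
  have hlt := hrow q hq (q.1+1, q.2) hq' rfl (Nat.lt_succ_self _)
  have hle := (Set.mem_Icc.mp (hbij.mapsTo hq')).2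
  omega

/-! ### finiteness -/

lemma finite_Y (s m i : ℕ) : (Y s m i).Finite := by
  have hL : {l : List ℕ | l.length ≤ s ∧ ∀ x ∈ l, x ≤ m}.Finite := by
    have h1 := List.finite_length_le (Fin (m+1)) s
    have h2 : {l : List ℕ | l.length ≤ s ∧ ∀ x ∈ l, x ≤ m} ⊆
        (fun l : List (Fin (m+1)) => l.map Fin.val) '' {l | l.length ≤ s} := by
      rintro l ⟨hlen, hbound⟩
      refine ⟨l.attach.map (fun x => ⟨x.1, Nat.lt_succ_of_le (hbound x.1 x.2)⟩), ?_, ?_⟩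
      · simpa using hlen
      · beta_reduce
        rw [List.map_map]
        exact List.attach_map_subtype_val l
    exact (h1.image _).subset h2
  have hF : {f : ℕ × ℕ → ℕ | (∀ q, f q ≤ m) ∧
      ∀ q : ℕ × ℕ, (s ≤ q.1 ∨ m ≤ q.2) → f q = 0}.Finite := by
    rw [← Set.finite_coe_iff]
    refine Finite.of_injective
      (fun f (q : Fin s × Fin m) =>
        (⟨f.1 (q.1.1, q.2.1), Nat.lt_succ_of_le (f.2.1 _)⟩ : Fin (m+1))) ?_
    intro f g h
    apply Subtype.ext
    funext q
    by_cases hq1 : q.1 < s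
    · by_cases hq2 : q.2 < m
      · have h2 := congrArg Fin.val (congrFun h (⟨q.1, hq1⟩, ⟨q.2, hq2⟩))
        exact h2
      · rw [f.2.2 q (Or.inr (by omega)), g.2.2 q (Or.inr (by omega))]
    · rw [f.2.2 q (Or.inl (by omega)), g.2.2 q (Or.inl (by omega))]
  apply (hL.prod hF).subset
  rintro ⟨lam, T⟩ ⟨hlen, hsort, hpos, hsum, hi, hT⟩
  dsimp only at hlen hsort hpos hsum hi hT
  refine ⟨⟨hlen, fun x hx => ?_⟩, fun q => ?_, fun q hq => ?_⟩
  · have := List.single_le_sum (fun y (_ : y ∈ lam) => Nat.zero_le y) x hx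
    omega
  · show T q ≤ m
    by_cases hq : q ∈ Cells lam
    · have := (Set.mem_Icc.mp (hT.1.mapsTo hq)).2
      omega
    · rw [hT.2.2.2 q hq]
      exact Nat.zero_le _
  · show T q = 0
    apply hT.2.2.2
    intro hmem
    obtain ⟨h1, h2⟩ := hmem
    have hb : lam.getD q.1 0 ≤ m := by
      rw [List.getD_eq_getElem _ _ h1]
      have := List.single_le_sum (fun y (_ : y ∈ lam) => Nat.zero_le y) _
        (List.getElem_mem h1)
      omega
    rcases hq with hq | hq
    · omega
    · omega

/-! ### the index set, fibers and insertion map -/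

def II (s : ℕ) : Finset ℕ := insert 0 (insert 2 (Finset.Icc 3 (s-1)))

def AA (s m : ℕ) : ℕ → Set (List ℕ × (ℕ × ℕ → ℕ)) := fun c =>
  if c = 0 then Y s m 0 else if c = 2 then Y s m 1
  else {p | p ∈ Y s m 0 ∧ p.1.getD c 0 < p.1.getD (c-1) 0}

def EE (s m : ℕ) : Set (ℕ × (List ℕ × (ℕ × ℕ → ℕ))) := ⋃ c ∈ II s, ({c} ×ˢ AA s m c)

def FF : ℕ × (List ℕ × (ℕ × ℕ → ℕ)) → List ℕ × (ℕ × ℕ → ℕ) :=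
  fun x => (ins x.2.1 x.1,
    fun q => if q = (x.1, x.2.1.getD x.1 0) then x.2.1.sum + 1 else x.2.2 q)

lemma mem_EE {s m : ℕ} {x : ℕ × (List ℕ × (ℕ × ℕ → ℕ))} :
    x ∈ EE s m ↔ x.1 ∈ II s ∧ x.2 ∈ AA s m x.1 := by
  simp only [EE, Set.mem_iUnion, Set.mem_prod, Set.mem_singleton_iff]
  constructor
  · rintro ⟨c, hc, h1, h2⟩
    rw [h1]
    exact ⟨hc, h2⟩
  · rintro ⟨h1, h2⟩
    exact ⟨x.1, h1, rfl, h2⟩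

lemma AA_finite (s m c : ℕ) : (AA s m c).Finite := by
  have : AA s m c ⊆ Y s m 0 ∪ Y s m 1 := by
    intro p hp
    rw [AA] at hp
    split at hp
    · exact Or.inl hp
    · split at hp
      · exact Or.inr hp
      · exact Or.inl hp.1
  exact ((finite_Y s m 0).union (finite_Y s m 1)).subset this

lemma AA_unpack {s m c : ℕ} {lam : List ℕ} {T : ℕ × ℕ → ℕ} (hs : 4 ≤ s)
    (hc : c ∈ II s) (h : (lam, T) ∈ AA s m c) :
    lam.length ≤ s ∧ lam.Pairwise (· ≥ ·) ∧ (∀ x ∈ lam, 0 < x) ∧ lam.sum = m ∧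
    IsSYT lam T ∧ c < s ∧ (c = 0 ∨ lam.getD c 0 < lam.getD (c-1) 0) ∧
    (c = 0 ∨ c = 2 ∨ (3 ≤ c ∧ c ≤ s - 1)) ∧
    (lam.getD 1 0 - lam.getD 2 0 = if c = 2 then 1 else 0) := by
  simp only [II, Finset.mem_insert, Finset.mem_Icc] at hc
  by_cases h0 : c = 0
  · subst h0
    rw [AA, if_pos rfl] at h
    obtain ⟨h1, h2, h3, h4, h5, h6⟩ := h
    exact ⟨h1, h2, h3, h4, h6, by omega, Or.inl rfl, Or.inl rfl, by simpa using h5⟩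
  by_cases h2c : c = 2
  · subst h2c
    rw [AA, if_neg (by omega), if_pos rfl] at h
    obtain ⟨h1, h2, h3, h4, h5, h6⟩ := h
    refine ⟨h1, h2, h3, h4, h6, by omega, Or.inr ?_, Or.inr (Or.inl rfl), by simpa using h5⟩
    have h5' : lam.getD 1 0 - lam.getD 2 0 = 1 := h5
    show lam.getD 2 0 < lam.getD 1 0
    omega
  · have hc3 : 3 ≤ c ∧ c ≤ s - 1 := by
      rcases hc with hc | hc | hc
      · omega
      · omega
      · exact hc
    rw [AA, if_neg h0, if_neg h2c] at h
    obtain ⟨⟨h1, h2, h3, h4, h5, h6⟩, hlt⟩ := h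
    refine ⟨h1, h2, h3, h4, h6, by omega, Or.inr hlt, Or.inr (Or.inr hc3), ?_⟩
    rw [if_neg h2c]
    exact h5

lemma addable_le_length {lam : List ℕ} {c : ℕ}
    (hadd : c = 0 ∨ lam.getD c 0 < lam.getD (c-1) 0) : c ≤ lam.length := by
  rcases hadd with rfl | hlt
  · exact Nat.zero_le _
  · have h1 : 0 < lam.getD (c-1) 0 := by omega
    have h2 := lt_length_of_getD_pos h1
    omega

lemma FF_mem {s n c : ℕ} {lam : List ℕ} {T : ℕ × ℕ → ℕ} (hs : 4 ≤ s) (hn : s ≤ n)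
    (hc : c ∈ II s) (h : (lam, T) ∈ AA s (n-1) c) : FF (c, (lam, T)) ∈ Y s n 0 := by
  obtain ⟨hlen, hsort, hpos, hsum, hT, hcs, hadd, hcases, hi⟩ := AA_unpack hs hc h
  have hcl : c ≤ lam.length := addable_le_length hadd
  show (ins lam c, fun q => if q = (c, lam.getD c 0) then lam.sum + 1 else T q) ∈ Y s n 0
  refine ⟨?_, ?_, ?_, ?_, ?_, ?_⟩
  · rw [length_ins hcl]
    simp only [max_le_iff]
    omega
  · exact sorted_ins hsort hcl hadd
  · exact pos_ins hpos
  · rw [sum_ins hcl]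
    omega
  · show (ins lam c).getD 1 0 - (ins lam c).getD 2 0 = 0
    rw [getD_ins hcl, getD_ins hcl]
    rcases hcases with rfl | rfl | ⟨h3, h4⟩
    · rw [if_neg (by omega), if_neg (by omega)]
      rw [if_neg (by omega)] at hi
      omega
    · rw [if_neg (by omega), if_pos rfl]
      rw [if_pos rfl] at hi
      omega
    · rw [if_neg (by omega), if_neg (by omega)]
      rw [if_neg (by omega)] at hi
      omega
  · exact isSYT_ins hsort hcl hT


lemma surj_FF {s n : ℕ} (hs : 4 ≤ s) (hn : s ≤ n) {mu : List ℕ} {U : ℕ × ℕ → ℕ}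
    (h : (mu, U) ∈ Y s n 0) :
    ∃ x ∈ EE s (n-1), FF x = (mu, U) := by
  obtain ⟨hlen, hsort, hpos, hsum, hi, hU⟩ := h
  dsimp only at hlen hsort hpos hsum hi hU
  have hn1 : 1 ≤ n := by omega
  have hsumIcc : n ∈ Set.Icc 1 mu.sum := by
    rw [hsum]; exact ⟨hn1, le_refl _⟩
  obtain ⟨q, hq, hqv⟩ := hU.1.surjOn hsumIcc
  have hqv' : U q = mu.sum := by rw [hqv, hsum]
  have hbot : mu.getD q.1 0 = q.2 + 1 := max_bottom hU hq hqv'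
  have hcorner : mu.getD (q.1+1) 0 < mu.getD q.1 0 := max_corner hsort hU hq hqv'
  have hclen : q.1 < mu.length := hq.1
  have hc1 : q.1 ≠ 1 := by
    intro h1
    have ha := getD_anti hsort (show (1:ℕ) ≤ 2 by omega)
    rw [h1] at hcorner
    have h2 : mu.getD 2 0 < mu.getD 1 0 := hcorner
    omega
  have hcs : q.1 < s := lt_of_lt_of_le hclen hlen
  have hcI : q.1 ∈ II s := by
    simp only [II, Finset.mem_insert, Finset.mem_Icc]
    omega
  set lam := rem mu q.1 with hlam_def
  set T : ℕ × ℕ → ℕ := fun p => if p = q then 0 else U p with hT_def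
  have hgetD : ∀ k, lam.getD k 0 = mu.getD k 0 - if k = q.1 then 1 else 0 :=
    getD_rem hsort hpos hcorner
  have hlam_pos : ∀ x ∈ lam, 0 < x := pos_rem hpos
  have hlam_sorted : lam.Pairwise (· ≥ ·) := sorted_rem hsort hpos hcorner
  have hlam_sum : lam.sum + 1 = n := by
    rw [← hsum]; exact sum_rem hpos hclen
  have hlam_len : lam.length ≤ s := le_trans (length_rem_le mu q.1) hlen
  have hcells : Cells lam = Cells mu \ {q} := by
    ext ⟨a, b⟩
    rw [cells_eq, cells_eq]
    simp only [Set.mem_setOf_eq, Set.mem_diff, Set.mem_singleton_iff, Prod.ext_iff]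
    rw [hgetD a]
    rcases eq_or_ne a q.1 with rfl | hne
    · rw [if_pos rfl]
      omega
    · rw [if_neg hne]
      omega
  have hT_syt : IsSYT lam T := isSYT_del hU hq hqv' hcells (by omega)
  have hAA : (lam, T) ∈ AA s (n-1) q.1 := by
    have hYlam : ∀ i', lam.getD 1 0 - lam.getD 2 0 = i' → (lam, T) ∈ Y s (n-1) i' :=
      fun i' hi' => ⟨hlam_len, hlam_sorted, hlam_pos, (by omega : lam.sum = n - 1), hi', hT_syt⟩
    simp only [II, Finset.mem_insert, Finset.mem_Icc] at hcI
    rcases hcI with hc0 | hc2 | ⟨hc3, hcs'⟩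
    · rw [AA, if_pos hc0]
      apply hYlam
      rw [hgetD 1, hgetD 2, if_neg (by omega), if_neg (by omega)]
      omega
    · rw [AA, if_neg (by omega), if_pos hc2]
      apply hYlam
      rw [hgetD 1, hgetD 2, if_neg (by omega), if_pos hc2.symm]
      have ha := getD_anti hsort (show (1:ℕ) ≤ 2 by omega)
      rw [hc2] at hbot
      omega
    · rw [AA, if_neg (by omega), if_neg (by omega)]
      refine ⟨hYlam 0 ?_, ?_⟩
      · rw [hgetD 1, hgetD 2, if_neg (by omega), if_neg (by omega)]
        omega
      · rw [hgetD q.1, hgetD (q.1-1), if_pos rfl, if_neg (by omega)]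
        have ha := getD_anti hsort (show q.1 - 1 ≤ q.1 by omega)
        omega
  have hcl : q.1 ≤ lam.length := le_length_rem hclen
  have hshape : ins lam q.1 = mu := by
    apply eq_of_getD (pos_ins hlam_pos) hpos
    intro k
    rw [getD_ins hcl k, hgetD k]
    rcases eq_or_ne k q.1 with rfl | hne
    · rw [if_pos (rfl : q.1 = q.1)]
      omega
    · rw [if_neg hne]
      omega
  have hq2 : ((q.1, lam.getD q.1 0) : ℕ × ℕ) = q := by
    have hv : lam.getD q.1 0 = q.2 := by
      rw [hgetD q.1, if_pos rfl]
      omega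
    rw [hv]
  have hFF : FF (q.1, (lam, T)) = (mu, U) := by
    show (ins lam q.1, fun p => if p = (q.1, lam.getD q.1 0) then lam.sum + 1 else T p)
        = (mu, U)
    rw [hshape, hq2]
    refine Prod.ext rfl ?_
    show (fun p => if p = q then lam.sum + 1 else T p) = U
    funext p
    beta_reduce
    by_cases hpq : p = q
    · rw [if_pos hpq, hpq]
      omega
    · rw [if_neg hpq]
      show (if p = q then 0 else U p) = U p
      rw [if_neg hpq]
  exact ⟨(q.1, (lam, T)), mem_EE.mpr ⟨hcI, hAA⟩, hFF⟩

lemma bijOn_FF {s n : ℕ} (hs : 4 ≤ s) (hn : s ≤ n) :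
    Set.BijOn FF (EE s (n-1)) (Y s n 0) := by
  refine ⟨?_, ?_, ?_⟩
  · rintro ⟨c, lam, T⟩ hx
    rw [mem_EE] at hx
    exact FF_mem hs hn hx.1 hx.2
  · rintro ⟨c, lam, T⟩ hx ⟨c', lam', T'⟩ hx' heq
    rw [mem_EE] at hx hx'
    obtain ⟨hlen, hsort, hpos, hsum, hT, hcs, hadd, hcases, hi⟩ := AA_unpack hs hx.1 hx.2
    obtain ⟨hlen', hsort', hpos', hsum', hT', hcs', hadd', hcases', hi'⟩ :=
      AA_unpack hs hx'.1 hx'.2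
    have hcl : c ≤ lam.length := addable_le_length hadd
    have hcl' : c' ≤ lam'.length := addable_le_length hadd'
    have himg := FF_mem hs hn hx.1 hx.2
    have hsyt : IsSYT (FF (c, (lam, T))).1 (FF (c, (lam, T))).2 := himg.2.2.2.2.2
    have hshape : ins lam c = ins lam' c' := congrArg Prod.fst heq
    have hfun := congrArg Prod.snd heq
    have hcell1 : ((c, lam.getD c 0) : ℕ × ℕ) ∈ Cells (ins lam c) := by
      rw [cells_ins hcl]
      exact Set.mem_insert _ _
    have hcell2 : ((c', lam'.getD c' 0) : ℕ × ℕ) ∈ Cells (ins lam c) := by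
      rw [hshape, cells_ins hcl']
      exact Set.mem_insert _ _
    have hval1 : (FF (c, (lam, T))).2 (c, lam.getD c 0) = lam.sum + 1 := by
      show (if ((c, lam.getD c 0) : ℕ × ℕ) = (c, lam.getD c 0) then lam.sum + 1
        else T (c, lam.getD c 0)) = lam.sum + 1
      rw [if_pos rfl]
    have hval2 : (FF (c, (lam, T))).2 (c', lam'.getD c' 0) = lam'.sum + 1 := by
      rw [heq]
      show (if ((c', lam'.getD c' 0) : ℕ × ℕ) = (c', lam'.getD c' 0) then lam'.sum + 1
        else T' (c', lam'.getD c' 0)) = lam'.sum + 1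
      rw [if_pos rfl]
    have hsums : lam.sum = lam'.sum := by omega
    have hqq : ((c, lam.getD c 0) : ℕ × ℕ) = (c', lam'.getD c' 0) := by
      apply hsyt.1.injOn hcell1 hcell2
      rw [hval1, hval2, hsums]
    have hcc : c = c' := congrArg Prod.fst hqq
    subst hcc
    have hlameq : lam = lam' := by
      apply eq_of_getD hpos hpos'
      intro k
      have hk := congrArg (fun l => l.getD k 0) hshape
      beta_reduce at hk
      rw [getD_ins hcl k, getD_ins hcl' k] at hk
      rcases eq_or_ne k c with rfl | hne
      · rw [if_pos rfl] at hk
        omega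
      · rw [if_neg hne] at hk
        omega
    subst hlameq
    have hq0 : ((c, lam.getD c 0) : ℕ × ℕ) ∉ Cells lam := by
      rw [cells_eq]
      simp only [Set.mem_setOf_eq]
      exact lt_irrefl _
    have hTeq : T = T' := by
      funext p
      have hp := congrFun hfun p
      simp only [FF] at hp
      by_cases hpq : p = (c, lam.getD c 0)
      · rw [hT.2.2.2 p (by rw [hpq]; exact hq0), hT'.2.2.2 p (by rw [hpq]; exact hq0)]
      · rw [if_neg hpq, if_neg hpq] at hp
        exact hp
    rw [hTeq]
  · intro x hx
    obtain ⟨mu, U⟩ := x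
    obtain ⟨y, hy, hFFy⟩ := surj_FF hs hn hx
    exact ⟨y, hy, hFFy⟩


/-! ### counting -/

lemma ncard_singleton_prod {X : Type*} (a : ℕ) (A : Set X) :
    ({a} ×ˢ A : Set (ℕ × X)).ncard = A.ncard := by
  rw [Set.singleton_prod]
  exact Set.ncard_image_of_injective _ (fun x y h => (Prod.ext_iff.mp h).2)

lemma ncard_biUnion_prod {X : Type*} (I : Finset ℕ) (A : ℕ → Set X)
    (hfin : ∀ c ∈ I, (A c).Finite) :
    (⋃ c ∈ I, ({c} ×ˢ A c) : Set (ℕ × X)).ncard = ∑ c ∈ I, (A c).ncard := by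
  classical
  induction I using Finset.induction_on with
  | empty => simp
  | @insert a I' ha ih =>
    rw [Finset.set_biUnion_insert, Finset.sum_insert ha]
    have hfina : ({a} ×ˢ A a : Set (ℕ × X)).Finite :=
      (Set.finite_singleton a).prod (hfin a (Finset.mem_insert_self a I'))
    have hrest : (⋃ c ∈ I', ({c} ×ˢ A c) : Set (ℕ × X)).Finite := by
      apply Set.Finite.biUnion I'.finite_toSet
      exact fun c hc => (Set.finite_singleton c).prod (hfin c (Finset.mem_insert_of_mem hc))
    have hdisj : Disjoint ({a} ×ˢ A a : Set (ℕ × X)) (⋃ c ∈ I', ({c} ×ˢ A c)) := by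
      rw [Set.disjoint_left]
      rintro ⟨x, y⟩ hx hy
      simp only [Set.mem_prod, Set.mem_singleton_iff] at hx
      simp only [Set.mem_iUnion, Set.mem_prod, Set.mem_singleton_iff] at hy
      obtain ⟨c, hc, hxc, -⟩ := hy
      apply ha
      have hac : a = c := by rw [← hx.1, hxc]
      rwa [hac]
    rw [Set.ncard_union_eq hdisj hfina hrest, ncard_singleton_prod,
      ih (fun c hc => hfin c (Finset.mem_insert_of_mem hc))]

lemma gamma_eq (s n i : ℕ) : gamma s n i = (Y s n i).ncard := Nat.card_coe_set_eq _

lemma rj_eq (s j m i : ℕ) : rj s j m i =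
    {p : List ℕ × (ℕ × ℕ → ℕ) |
      p ∈ Y s m i ∧ p.1.getD (j - 1) 0 = p.1.getD j 0}.ncard :=
  Nat.card_coe_set_eq _

lemma split_c {s m c : ℕ} (hc3 : 3 ≤ c) :
    (Y s m 0).ncard = (AA s m c).ncard +
      {p : List ℕ × (ℕ × ℕ → ℕ) |
        p ∈ Y s m 0 ∧ p.1.getD (c - 1) 0 = p.1.getD c 0}.ncard := by
  have hA : AA s m c = {p | p ∈ Y s m 0 ∧ p.1.getD c 0 < p.1.getD (c-1) 0} := by
    rw [AA, if_neg (by omega), if_neg (by omega)]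
  have hunion : Y s m 0 = AA s m c ∪
      {p | p ∈ Y s m 0 ∧ p.1.getD (c - 1) 0 = p.1.getD c 0} := by
    rw [hA]
    ext p
    simp only [Set.mem_union, Set.mem_setOf_eq]
    constructor
    · intro hp
      have ha := getD_anti hp.2.1 (show c - 1 ≤ c by omega)
      rcases lt_or_eq_of_le ha with h | h
      · exact Or.inl ⟨hp, h⟩
      · exact Or.inr ⟨hp, h.symm⟩
    · rintro (⟨h, -⟩ | ⟨h, -⟩) <;> exact h
  have hdisj : Disjoint (AA s m c)
      {p : List ℕ × (ℕ × ℕ → ℕ) | p ∈ Y s m 0 ∧ p.1.getD (c - 1) 0 = p.1.getD c 0} := by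
    rw [hA, Set.disjoint_left]
    rintro p ⟨-, h1⟩ ⟨-, h2⟩
    omega
  have hf1 : (AA s m c).Finite := AA_finite s m c
  have hf2 : {p : List ℕ × (ℕ × ℕ → ℕ) |
      p ∈ Y s m 0 ∧ p.1.getD (c - 1) 0 = p.1.getD c 0}.Finite :=
    (finite_Y s m 0).subset (fun p hp => hp.1)
  conv_lhs => rw [hunion]
  rw [Set.ncard_union_eq hdisj hf1 hf2]


end Aux13

theorem stmt13 (s n : ℕ) (hs : 4 ≤ s) (hn : s ≤ n) :
    gamma s n 0 + (∑ j ∈ Finset.Icc 3 (s - 1), rj s j (n - 1) 0) =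
      (s - 2) * gamma s (n - 1) 0 + gamma s (n - 1) 1 := by
  classical
  open Aux13 in
  have hbij := bijOn_FF hs hn
  have h1 : gamma s n 0 = (Aux13.EE s (n-1)).ncard := by
    rw [Aux13.gamma_eq, ← Set.BijOn.image_eq hbij,
      Set.ncard_image_of_injOn hbij.injOn]
  have h2 : (Aux13.EE s (n-1)).ncard = ∑ c ∈ Aux13.II s, (Aux13.AA s (n-1) c).ncard := by
    unfold Aux13.EE
    exact Aux13.ncard_biUnion_prod (Aux13.II s) _ (fun c _ => Aux13.AA_finite s (n-1) c)
  have h01 : (0 : ℕ) ∉ insert 2 (Finset.Icc 3 (s-1)) := by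
    simp only [Finset.mem_insert, Finset.mem_Icc]
    omega
  have h2I : (2 : ℕ) ∉ Finset.Icc 3 (s-1) := by
    simp only [Finset.mem_Icc]
    omega
  have hA0 : Aux13.AA s (n-1) 0 = Y s (n-1) 0 := by
    rw [Aux13.AA]
    simp
  have hA2 : Aux13.AA s (n-1) 2 = Y s (n-1) 1 := by
    rw [Aux13.AA]
    norm_num
  have h3 : ∑ c ∈ Aux13.II s, (Aux13.AA s (n-1) c).ncard
      = (Y s (n-1) 0).ncard + (Y s (n-1) 1).ncard
        + ∑ c ∈ Finset.Icc 3 (s-1), (Aux13.AA s (n-1) c).ncard := by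
    rw [Aux13.II, Finset.sum_insert h01, Finset.sum_insert h2I, hA0, hA2]
    ring
  have h4 : ∀ c ∈ Finset.Icc 3 (s-1),
      (Aux13.AA s (n-1) c).ncard + rj s c (n-1) 0 = gamma s (n-1) 0 := by
    intro c hc
    rw [Finset.mem_Icc] at hc
    rw [Aux13.gamma_eq, Aux13.rj_eq, Aux13.split_c hc.1]
  have h5 : ∑ c ∈ Finset.Icc 3 (s-1), (Aux13.AA s (n-1) c).ncard
      + ∑ c ∈ Finset.Icc 3 (s-1), rj s c (n-1) 0
      = (s-3) * gamma s (n-1) 0 := by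
    have hcard : s - 1 + 1 - 3 = s - 3 := by omega
    rw [← Finset.sum_add_distrib, Finset.sum_congr rfl h4, Finset.sum_const,
      Nat.card_Icc, hcard, smul_eq_mul]
  have hg : gamma s n 0 = gamma s (n-1) 0 + gamma s (n-1) 1
      + ∑ c ∈ Finset.Icc 3 (s-1), (Aux13.AA s (n-1) c).ncard := by
    rw [h1, h2, h3, Aux13.gamma_eq s (n-1) 0, Aux13.gamma_eq s (n-1) 1]
  rw [hg]
  have hmul : (s-2) * gamma s (n-1) 0 = (s-3) * gamma s (n-1) 0 + gamma s (n-1) 0 := by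
    have hx : s - 2 = (s-3) + 1 := by omega
    rw [hx, add_mul, one_mul]
  rw [hmul, ← h5]
  ring
end

section
/- For s ≥ 4, n ≥ s and 1 ≤ i ≤ ⌊n/2⌋, γ^{(s)}(n,i) = γ^{(s)}(n−1,i−1) + (s−2)·γ^{(s)}(n−1,i) + γ^{(s)}(n−1,i+1) − r_1^{(s)}(n−1,i−1) − Σ_{j=3}^{s−1} r_j^{(s)}(n−1,i). -/
open Finset Filter Topology

namespace S14

/-- antitone getD for sorted-≥ lists of naturals -/
lemma getD_anti {l : List ℕ} (h : l.Pairwise (· ≥ ·)) {a b : ℕ} (hab : a ≤ b) :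
    l.getD b 0 ≤ l.getD a 0 := by
  rcases lt_or_ge b l.length with hb | hb
  · have ha : a < l.length := lt_of_le_of_lt hab hb
    rw [List.getD_eq_getElem _ _ hb, List.getD_eq_getElem _ _ ha]
    rcases eq_or_lt_of_le hab with rfl | hab'
    · exact le_rfl
    · exact (List.pairwise_iff_get.1 h) ⟨a, ha⟩ ⟨b, hb⟩ hab'
  · rw [List.getD_eq_default _ _ hb]; exact Nat.zero_le _

lemma getD_pos_iff {l : List ℕ} (hpos : ∀ x ∈ l, 0 < x) {c : ℕ} :
    0 < l.getD c 0 ↔ c < l.length := by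
  constructor
  · intro h
    by_contra hc
    rw [List.getD_eq_default _ _ (le_of_not_gt hc)] at h
    exact lt_irrefl 0 h
  · intro h
    rw [List.getD_eq_getElem _ _ h]
    exact hpos _ (List.getElem_mem h)

lemma cells_eq {l : List ℕ} (hpos : ∀ x ∈ l, 0 < x) :
    Cells l = {q | q.2 < l.getD q.1 0} := by
  ext q
  simp only [Cells, Set.mem_setOf_eq]
  constructor
  · rintro ⟨-, h⟩; exact h
  · intro h
    refine ⟨(getD_pos_iff hpos).1 (lt_of_le_of_lt (Nat.zero_le _) h), h⟩

lemma list_ext_of_getD {l₁ l₂ : List ℕ} (h₁ : ∀ x ∈ l₁, 0 < x) (h₂ : ∀ x ∈ l₂, 0 < x)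
    (h : ∀ c, l₁.getD c 0 = l₂.getD c 0) : l₁ = l₂ := by
  have hl : l₁.length = l₂.length := by
    by_contra hne
    rcases Nat.lt_or_ge l₁.length l₂.length with hlt | hge
    · have := (getD_pos_iff h₂).2 hlt
      rw [← h] at this
      rw [List.getD_eq_default _ _ le_rfl] at this; exact lt_irrefl 0 this
    · rcases lt_or_eq_of_le hge with hlt | he
      · have := (getD_pos_iff h₁).2 hlt
        rw [h] at this
        rw [List.getD_eq_default _ _ le_rfl] at this; exact lt_irrefl 0 this
      · exact hne he.symm
  refine List.ext_getElem hl ?_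
  intro n hn1 hn2
  have := h n
  rwa [List.getD_eq_getElem _ _ hn1, List.getD_eq_getElem _ _ hn2] at this

lemma getD_le_sum (l : List ℕ) (c : ℕ) : l.getD c 0 ≤ l.sum := by
  rcases lt_or_ge c l.length with h | h
  · rw [List.getD_eq_getElem _ _ h]
    exact List.single_le_sum (fun x _ => Nat.zero_le x) _ (List.getElem_mem h)
  · rw [List.getD_eq_default _ _ h]; exact Nat.zero_le _

/-- add a cell at the bottom of column `c` (0-indexed) -/
def addShape (c : ℕ) (l : List ℕ) : List ℕ :=
  if c < l.length then l.set c (l.getD c 0 + 1) else l ++ [1]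

/-- delete the bottom cell of column `c` -/
def delShape (c : ℕ) (l : List ℕ) : List ℕ :=
  if l.getD c 0 = 1 then l.take c else l.set c (l.getD c 0 - 1)

lemma getD_addShape (c : ℕ) {l : List ℕ} (hc : c ≤ l.length) (k : ℕ) :
    (addShape c l).getD k 0 = l.getD k 0 + (if k = c then 1 else 0) := by
  unfold addShape
  rcases lt_or_eq_of_le hc with h | h
  · rw [if_pos h]
    rcases lt_or_ge k l.length with hk | hk
    · rw [List.getD_eq_getElem _ _ (by simpa using hk), List.getElem_set,
        List.getD_eq_getElem _ _ hk]
      by_cases he : k = c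
      · subst he; rw [if_pos rfl, if_pos rfl, List.getD_eq_getElem _ _ hk]
      · rw [if_neg (Ne.symm he), if_neg he, add_zero]
    · rw [List.getD_eq_default _ _ (by simpa using hk), List.getD_eq_default _ _ hk,
        if_neg (by omega)]
  · rw [if_neg (by omega)]
    rcases lt_trichotomy k c with hk | hk | hk
    · rw [List.getD_append _ _ _ _ (by omega : k < l.length), if_neg (by omega), add_zero]
    · rw [List.getD_append_right _ _ _ _ (by omega : l.length ≤ k),
        List.getD_eq_default _ _ (by omega : l.length ≤ k), if_pos hk,
        (by omega : k - l.length = 0)]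
      simp
    · rw [List.getD_append_right _ _ _ _ (by omega : l.length ≤ k),
        List.getD_eq_default _ _ (by omega : l.length ≤ k), if_neg (by omega),
        List.getD_eq_default _ _ (by simp; omega : ([1]:List ℕ).length ≤ k - l.length)]

lemma length_addShape_le (c : ℕ) {l : List ℕ} (hc : c ≤ l.length) :
    (addShape c l).length ≤ l.length + 1 := by
  unfold addShape
  split <;> simp

lemma sum_addShape (c : ℕ) {l : List ℕ} (hc : c ≤ l.length) :
    (addShape c l).sum = l.sum + 1 := by
  unfold addShape
  rcases lt_or_eq_of_le hc with h | h
  · rw [if_pos h, List.sum_set, if_pos h]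
    have := List.sum_take_add_sum_drop l c
    have hd : l.drop c = l[c] :: l.drop (c + 1) := List.drop_eq_getElem_cons h
    rw [hd] at this
    simp only [List.sum_cons] at this
    rw [← List.getD_eq_getElem l 0 h] at this
    omega
  · rw [if_neg (by omega), List.sum_append]
    simp

lemma pos_addShape (c : ℕ) {l : List ℕ} (hpos : ∀ x ∈ l, 0 < x) :
    ∀ x ∈ addShape c l, 0 < x := by
  unfold addShape
  intro x hx
  split at hx
  · rcases List.mem_or_eq_of_mem_set hx with h | h
    · exact hpos _ h
    · omega
  · rcases List.mem_append.1 hx with h | h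
    · exact hpos _ h
    · simp at h; omega

lemma sorted_addShape (c : ℕ) {l : List ℕ} (hc : c ≤ l.length) (hs : l.Pairwise (· ≥ ·))
    (hcond : c = 0 ∨ l.getD c 0 < l.getD (c - 1) 0) :
    (addShape c l).Pairwise (· ≥ ·) := by
  rw [List.pairwise_iff_get]
  intro a b hab
  simp only [List.get_eq_getElem, ge_iff_le]
  rw [← List.getD_eq_getElem (addShape c l) 0 a.isLt, ← List.getD_eq_getElem (addShape c l) 0 b.isLt,
    getD_addShape c hc, getD_addShape c hc]
  have hab' : (a : ℕ) < (b : ℕ) := hab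
  have hle : l.getD b 0 ≤ l.getD a 0 := getD_anti hs (le_of_lt hab')
  by_cases ha : (a : ℕ) = c
  · rw [if_pos ha, if_neg (by omega)]; omega
  · by_cases hb : (b : ℕ) = c
    · rw [if_neg ha, if_pos hb, hb]
      rcases hcond with h0 | hlt
      · omega
      · have : l.getD (a:ℕ) 0 ≥ l.getD (c - 1) 0 := getD_anti hs (show (a:ℕ) ≤ c - 1 by omega)
        omega
    · rw [if_neg ha, if_neg hb]; omega

lemma getD_delShape (c : ℕ) {l : List ℕ} (h1 : 0 < l.getD c 0)
    (h2 : l.getD c 0 = 1 → l.length = c + 1) (k : ℕ) :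
    (delShape c l).getD k 0 = l.getD k 0 - (if k = c then 1 else 0) := by
  unfold delShape
  by_cases he : l.getD c 0 = 1
  · rw [if_pos he]
    have hlen := h2 he
    rcases lt_trichotomy k c with hk | hk | hk
    · rw [if_neg (by omega), Nat.sub_zero, List.getD_eq_getElem _ _ (by rw [List.length_take]; omega),
        List.getElem_take]
      exact (List.getD_eq_getElem _ _ (by omega)).symm
    · subst hk
      rw [if_pos rfl, he, List.getD_eq_default _ _ (by rw [List.length_take]; omega)]
    · rw [if_neg (by omega), Nat.sub_zero, List.getD_eq_default _ _ (by rw [List.length_take]; omega),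
        List.getD_eq_default _ _ (by omega)]
  · rw [if_neg he]
    have hc : c < l.length := by
      by_contra hcc
      rw [List.getD_eq_default _ _ (by omega)] at h1; omega
    rcases lt_or_ge k l.length with hk | hk
    · rw [List.getD_eq_getElem _ _ (by simpa using hk), List.getElem_set,
        List.getD_eq_getElem _ _ hk]
      by_cases hkc : k = c
      · subst hkc; rw [if_pos rfl, if_pos rfl, List.getD_eq_getElem _ _ hk]
      · rw [if_neg (Ne.symm hkc), if_neg hkc, Nat.sub_zero]
    · rw [List.getD_eq_default _ _ (by simpa using hk), List.getD_eq_default _ _ hk,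
        if_neg (by omega)]

lemma length_delShape_le (c : ℕ) (l : List ℕ) : (delShape c l).length ≤ l.length := by
  unfold delShape
  split
  · rw [List.length_take]; omega
  · rw [List.length_set]

lemma sum_delShape (c : ℕ) {l : List ℕ} (h1 : 0 < l.getD c 0)
    (h2 : l.getD c 0 = 1 → l.length = c + 1) :
    (delShape c l).sum + 1 = l.sum := by
  unfold delShape
  have hc : c < l.length := (by
    by_contra hcc
    rw [List.getD_eq_default _ _ (by omega)] at h1; omega)
  by_cases he : l.getD c 0 = 1
  · rw [if_pos he]
    have hlen := h2 he
    have := List.sum_take_add_sum_drop l c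
    have hd : l.drop c = l[c] :: l.drop (c + 1) := List.drop_eq_getElem_cons hc
    have hd2 : l.drop (c+1) = [] := List.drop_eq_nil_of_le (by omega)
    rw [hd, hd2] at this
    simp only [List.sum_cons, List.sum_nil, add_zero] at this
    rw [← List.getD_eq_getElem l 0 hc, he] at this
    omega
  · rw [if_neg he, List.sum_set, if_pos hc]
    have := List.sum_take_add_sum_drop l c
    have hd : l.drop c = l[c] :: l.drop (c + 1) := List.drop_eq_getElem_cons hc
    rw [hd] at this
    simp only [List.sum_cons] at this
    rw [← List.getD_eq_getElem l 0 hc] at this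
    omega

lemma pos_delShape (c : ℕ) {l : List ℕ} (hpos : ∀ x ∈ l, 0 < x) (h1 : 0 < l.getD c 0)
    (h2 : l.getD c 0 = 1 → l.length = c + 1) :
    ∀ x ∈ delShape c l, 0 < x := by
  unfold delShape
  intro x hx
  by_cases he : l.getD c 0 = 1
  · rw [if_pos he] at hx
    exact hpos _ ((List.take_sublist c l).subset hx)
  · rw [if_neg he] at hx
    rcases List.mem_or_eq_of_mem_set hx with h | h
    · exact hpos _ h
    · omega

lemma sorted_delShape (c : ℕ) {l : List ℕ} (hs : l.Pairwise (· ≥ ·)) (h1 : 0 < l.getD c 0)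
    (h2 : l.getD c 0 = 1 → l.length = c + 1)
    (hcorner : l.getD (c + 1) 0 < l.getD c 0) :
    (delShape c l).Pairwise (· ≥ ·) := by
  rw [List.pairwise_iff_get]
  intro a b hab
  simp only [List.get_eq_getElem, ge_iff_le]
  rw [← List.getD_eq_getElem (delShape c l) 0 a.isLt, ← List.getD_eq_getElem (delShape c l) 0 b.isLt,
    getD_delShape c h1 h2, getD_delShape c h1 h2]
  have hab' : (a : ℕ) < (b : ℕ) := hab
  have hle : l.getD b 0 ≤ l.getD a 0 := getD_anti hs (le_of_lt hab')
  by_cases ha : (a : ℕ) = c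
  · rw [if_pos ha, if_neg (by omega), ha]
    have : l.getD (b:ℕ) 0 ≤ l.getD (c+1) 0 := getD_anti hs (by omega)
    omega
  · by_cases hb : (b : ℕ) = c
    · rw [if_neg ha, if_pos hb, hb]
      have : l.getD c 0 ≤ l.getD (a:ℕ) 0 := getD_anti hs (by omega)
      omega
    · rw [if_neg ha, if_neg hb]; omega

section C
/-- SYT on `n` cells with at most `s` columns (no diff condition) -/
def Ys (s n : ℕ) : Set (List ℕ × (ℕ × ℕ → ℕ)) :=
  {p | p.1.length ≤ s ∧ p.1.Pairwise (· ≥ ·) ∧ (∀ x ∈ p.1, 0 < x) ∧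
       p.1.sum = n ∧ IsSYT p.1 p.2}

def addT (c : ℕ) (p : List ℕ × (ℕ × ℕ → ℕ)) : List ℕ × (ℕ × ℕ → ℕ) :=
  (addShape c p.1, fun q => if q = (c, p.1.getD c 0) then p.1.sum + 1 else p.2 q)

def delT (c : ℕ) (p : List ℕ × (ℕ × ℕ → ℕ)) : List ℕ × (ℕ × ℕ → ℕ) :=
  (delShape c p.1, fun q => if q = (c, p.1.getD c 0 - 1) then 0 else p.2 q)

/-- tableaux whose maximal entry lies in column `c` -/
def Acol (s n c : ℕ) : Set (List ℕ × (ℕ × ℕ → ℕ)) :=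
  {p | p ∈ Ys s n ∧ ∃ r, p.2 (c, r) = n}

/-- tableaux to which a cell can be added in column `c` -/
def Bcol (s m c : ℕ) : Set (List ℕ × (ℕ × ℕ → ℕ)) :=
  {p | p ∈ Ys s m ∧ (c = 0 ∨ p.1.getD c 0 < p.1.getD (c - 1) 0)}

lemma c_le_length {s m c : ℕ} {p : List ℕ × (ℕ × ℕ → ℕ)} (hp : p ∈ Bcol s m c) :
    c ≤ p.1.length := by
  obtain ⟨⟨-, -, hpos, -, -⟩, hcond⟩ := hp
  rcases hcond with h0 | hlt
  · omega
  · have : 0 < p.1.getD (c - 1) 0 := lt_of_le_of_lt (Nat.zero_le _) hlt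
    have := (getD_pos_iff hpos).1 this
    omega

lemma length_addShape (c : ℕ) {l : List ℕ} :
    (addShape c l).length = if c < l.length then l.length else l.length + 1 := by
  unfold addShape
  split <;> simp_all

lemma cells_add {c : ℕ} {l : List ℕ} (hc : c ≤ l.length) (hpos : ∀ x ∈ l, 0 < x) :
    Cells (addShape c l) = Cells l ∪ {(c, l.getD c 0)} := by
  rw [cells_eq (pos_addShape c hpos), cells_eq hpos]
  ext q
  simp only [Set.mem_setOf_eq, Set.mem_union, Set.mem_singleton_iff, getD_addShape c hc]
  constructor
  · intro h
    by_cases hq : q.1 = c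
    · rw [if_pos hq] at h
      rcases Nat.lt_or_ge q.2 (l.getD q.1 0) with h' | h'
      · exact Or.inl h'
      · right
        have h2 : q.2 = l.getD c 0 := by rw [hq] at h h'; omega
        exact Prod.ext hq h2
    · rw [if_neg hq, add_zero] at h; exact Or.inl h
  · rintro (h | h)
    · omega
    · rw [h]; simp

lemma mem_add {s m c : ℕ} {p : List ℕ × (ℕ × ℕ → ℕ)} (hcs : c < s)
    (hp : p ∈ Bcol s m c) : addT c p ∈ Acol s (m + 1) c := by
  have hc : c ≤ p.1.length := c_le_length hp
  obtain ⟨l, T⟩ := p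
  obtain ⟨⟨hlen, hsort, hpos, hsum, hsyt⟩, hcond⟩ := hp
  obtain ⟨hbij, hcol, hrow, hzero⟩ := hsyt
  dsimp only at hlen hsort hpos hsum hbij hcol hrow hzero hcond hc
  obtain ⟨x, hxdef⟩ : ∃ x : ℕ × ℕ, x = (c, l.getD c 0) := ⟨_, rfl⟩
  have hxnot : x ∉ Cells l := by
    rw [cells_eq hpos, hxdef]; simp
  have hTle : ∀ q ∈ Cells l, T q ∈ Set.Icc 1 l.sum := hbij.mapsTo
  have hcells : Cells (addShape c l) = Cells l ∪ {x} := by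
    rw [hxdef]; exact cells_add hc hpos
  have hsum' : (addShape c l).sum = l.sum + 1 := sum_addShape c hc
  refine ⟨⟨?_, sorted_addShape c hc hsort hcond, pos_addShape c hpos,
      by show (addShape c l).sum = m + 1; rw [hsum', hsum], ?_⟩, ?_⟩
  · show (addShape c l).length ≤ s
    rw [length_addShape]
    split
    · exact hlen
    · omega
  · -- IsSYT
    simp only [addT, ← hxdef]
    refine ⟨?_, ?_, ?_, ?_⟩
    · -- BijOn
      show Set.BijOn _ (Cells (addShape c l)) (Set.Icc 1 (addShape c l).sum)
      rw [hcells, hsum', hsum]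
      refine ⟨?_, ?_, ?_⟩
      · -- MapsTo
        rintro q (hq | hq)
        · have hqx : q ≠ x := fun h => hxnot (h ▸ hq)
          simp only [if_neg hqx]
          have := hTle q hq
          rw [hsum] at this
          exact ⟨this.1, le_trans this.2 (Nat.le_succ _)⟩
        · rw [Set.mem_singleton_iff] at hq
          simp only [if_pos hq]
          exact ⟨by omega, le_rfl⟩
      · -- InjOn
        rintro q1 hq1 q2 hq2 he
        rcases hq1 with hq1 | hq1 <;> rcases hq2 with hq2 | hq2
        · have h1 : q1 ≠ x := fun h => hxnot (h ▸ hq1)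
          have h2 : q2 ≠ x := fun h => hxnot (h ▸ hq2)
          simp only [if_neg h1, if_neg h2] at he
          exact hbij.injOn hq1 hq2 he
        · rw [Set.mem_singleton_iff] at hq2
          have h1 : q1 ≠ x := fun h => hxnot (h ▸ hq1)
          simp only [if_neg h1, if_pos hq2] at he
          have := (hTle q1 hq1).2
          omega
        · rw [Set.mem_singleton_iff] at hq1
          have h2 : q2 ≠ x := fun h => hxnot (h ▸ hq2)
          simp only [if_pos hq1, if_neg h2] at he
          have := (hTle q2 hq2).2
          omega
        · rw [Set.mem_singleton_iff] at hq1 hq2; rw [hq1, hq2]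
      · -- SurjOn
        intro v hv
        rcases eq_or_lt_of_le hv.2 with hv1 | hv1
        · refine ⟨x, Or.inr rfl, ?_⟩
          show (if x = x then m + 1 else T x) = v
          rw [if_pos rfl]; omega
        · have : v ∈ Set.Icc 1 l.sum := ⟨hv.1, by omega⟩
          obtain ⟨q, hq, hqv⟩ := hbij.surjOn this
          have hqx : q ≠ x := fun h => hxnot (h ▸ hq)
          refine ⟨q, Or.inl hq, ?_⟩
          simp only [if_neg hqx]
          exact hqv
    · -- column increasing
      intro p1 hp1 p2 hp2 hcol1 hlt
      rw [hcells] at hp1 hp2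
      by_cases h2x : p2 = x
      · have h1x : p1 ≠ x := by rintro rfl; rw [h2x] at hlt; omega
        have hp1' : p1 ∈ Cells l := hp1.resolve_right (by simpa using h1x)
        simp only [if_neg h1x, if_pos h2x]
        have := (hTle p1 hp1').2; omega
      · have hp2' : p2 ∈ Cells l := hp2.resolve_right (by simpa using h2x)
        by_cases h1x : p1 = x
        · exfalso
          rw [cells_eq hpos] at hp2'
          have h2 : p2.2 < l.getD p2.1 0 := hp2'
          rw [← hcol1, h1x, hxdef] at h2
          rw [h1x, hxdef] at hlt
          simp only at h2 hlt
          omega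
        · have hp1' : p1 ∈ Cells l := hp1.resolve_right (by simpa using h1x)
          simp only [if_neg h1x, if_neg h2x]
          exact hcol p1 hp1' p2 hp2' hcol1 hlt
    · -- row increasing
      intro p1 hp1 p2 hp2 hrow1 hlt
      rw [hcells] at hp1 hp2
      by_cases h2x : p2 = x
      · have h1x : p1 ≠ x := by rintro rfl; rw [h2x] at hlt; omega
        have hp1' : p1 ∈ Cells l := hp1.resolve_right (by simpa using h1x)
        simp only [if_neg h1x, if_pos h2x]
        have := (hTle p1 hp1').2; omega
      · have hp2' : p2 ∈ Cells l := hp2.resolve_right (by simpa using h2x)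
        by_cases h1x : p1 = x
        · exfalso
          rw [cells_eq hpos] at hp2'
          have h2 : p2.2 < l.getD p2.1 0 := hp2'
          have hanti : l.getD p2.1 0 ≤ l.getD c 0 := by
            apply getD_anti hsort
            rw [h1x, hxdef] at hlt
            exact le_of_lt hlt
          rw [← hrow1, h1x, hxdef] at h2
          simp only at h2
          omega
        · have hp1' : p1 ∈ Cells l := hp1.resolve_right (by simpa using h1x)
          simp only [if_neg h1x, if_neg h2x]
          exact hrow p1 hp1' p2 hp2' hrow1 hlt
    · -- zero outside
      intro q hq
      rw [hcells] at hq
      have h1 : q ∉ Cells l := fun h => hq (Or.inl h)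
      have h2 : q ≠ x := fun h => hq (Or.inr h)
      simp only [if_neg h2]
      exact hzero q h1
  · -- max entry in column c
    refine ⟨l.getD c 0, ?_⟩
    show (if ((c, l.getD c 0) : ℕ × ℕ) = (c, l.getD c 0) then l.sum + 1 else _) = m + 1
    rw [if_pos rfl, hsum]

lemma length_delShape (c : ℕ) {l : List ℕ} (h1 : 0 < l.getD c 0) :
    (delShape c l).length = if l.getD c 0 = 1 then c else l.length := by
  have hc : c < l.length := by
    by_contra h
    rw [List.getD_eq_default _ _ (by omega)] at h1; omega
  unfold delShape
  split
  · rw [List.length_take]; omega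
  · rw [List.length_set]

lemma cells_del {c : ℕ} {l : List ℕ} (hpos : ∀ x ∈ l, 0 < x) (h1 : 0 < l.getD c 0)
    (h2 : l.getD c 0 = 1 → l.length = c + 1) :
    Cells (delShape c l) = Cells l \ {(c, l.getD c 0 - 1)} := by
  rw [cells_eq (pos_delShape c hpos h1 h2), cells_eq hpos]
  ext q
  simp only [Set.mem_setOf_eq, Set.mem_diff, Set.mem_singleton_iff, getD_delShape c h1 h2,
    Prod.ext_iff]
  by_cases hq : q.1 = c
  · rw [if_pos hq, hq]
    constructor
    · intro h; exact ⟨by omega, fun ⟨_, h2'⟩ => by omega⟩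
    · rintro ⟨h, hne⟩
      have : ¬ (q.2 = l.getD c 0 - 1) := fun he => hne ⟨rfl, he⟩
      omega
  · rw [if_neg hq]
    constructor
    · intro h; exact ⟨by omega, fun ⟨h1', _⟩ => hq h1'⟩
    · rintro ⟨h, -⟩; omega

lemma mem_del {s m c : ℕ} {p : List ℕ × (ℕ × ℕ → ℕ)}
    (hp : p ∈ Acol s (m + 1) c) : delT c p ∈ Bcol s m c := by
  obtain ⟨l, T⟩ := p
  obtain ⟨⟨hlen, hsort, hpos, hsum, hsyt⟩, ⟨r, hr⟩⟩ := hp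
  obtain ⟨hbij, hcol, hrow, hzero⟩ := hsyt
  dsimp only at hlen hsort hpos hsum hbij hcol hrow hzero hr
  have hTle : ∀ q ∈ Cells l, T q ∈ Set.Icc 1 l.sum := hbij.mapsTo
  have hrc : ((c, r) : ℕ × ℕ) ∈ Cells l := by
    by_contra h
    rw [hzero _ h] at hr; omega
  have hcl : c < l.length := hrc.1
  have hrlt : r < l.getD c 0 := hrc.2
  have hr_eq : r = l.getD c 0 - 1 := by
    by_contra h
    have h' : r + 1 < l.getD c 0 := by omega
    have hcell2 : ((c, r + 1) : ℕ × ℕ) ∈ Cells l := ⟨hcl, h'⟩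
    have := hcol (c, r) hrc (c, r + 1) hcell2 rfl (by omega)
    have h2 := (hTle _ hcell2).2
    rw [hr, hsum] at *
    omega
  have h1 : 0 < l.getD c 0 := by omega
  have hcorner : l.getD (c + 1) 0 < l.getD c 0 := by
    by_contra h
    push_neg at h
    have hcell2 : ((c + 1, r) : ℕ × ℕ) ∈ Cells l := by
      rw [cells_eq hpos]
      exact lt_of_lt_of_le hrlt h
    have := hrow (c, r) hrc (c + 1, r) hcell2 rfl (by omega)
    have h2 := (hTle _ hcell2).2
    rw [hr, hsum] at *
    omega
  have h2 : l.getD c 0 = 1 → l.length = c + 1 := by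
    intro he
    by_contra hne
    have hlt : c + 1 < l.length := by omega
    have : 0 < l.getD (c + 1) 0 := by
      rw [List.getD_eq_getElem _ _ hlt]
      exact hpos _ (List.getElem_mem hlt)
    omega
  obtain ⟨x, hxdef⟩ : ∃ x : ℕ × ℕ, x = (c, l.getD c 0 - 1) := ⟨_, rfl⟩
  have hxr : x = (c, r) := by rw [hxdef, hr_eq]
  have hTx : T x = m + 1 := by rw [hxr, hr]
  have hxcell : x ∈ Cells l := by rw [hxr]; exact hrc
  have hcells : Cells (delShape c l) = Cells l \ {x} := by
    rw [hxdef]; exact cells_del hpos h1 h2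
  have hsum' : (delShape c l).sum + 1 = l.sum := sum_delShape c h1 h2
  refine ⟨⟨le_trans (length_delShape_le c l) hlen,
    sorted_delShape c hsort h1 h2 hcorner, pos_delShape c hpos h1 h2,
    by show (delShape c l).sum = m; omega, ?_⟩, ?_⟩
  · -- IsSYT
    simp only [delT, ← hxdef]
    refine ⟨?_, ?_, ?_, ?_⟩
    · -- BijOn
      show Set.BijOn _ (Cells (delShape c l)) (Set.Icc 1 (delShape c l).sum)
      rw [hcells, show (delShape c l).sum = m by omega]
      refine ⟨?_, ?_, ?_⟩
      · rintro q ⟨hq, hqx⟩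
        rw [Set.mem_singleton_iff] at hqx
        simp only [if_neg hqx]
        have hv := hTle q hq
        rw [hsum] at hv
        have : T q ≠ m + 1 := by
          intro he
          exact hqx (hbij.injOn hq hxcell (by rw [he, hTx]))
        exact ⟨hv.1, by have hv2 := hv.2; omega⟩
      · rintro q1 ⟨hq1, hq1x⟩ q2 ⟨hq2, hq2x⟩ he
        rw [Set.mem_singleton_iff] at hq1x hq2x
        simp only [if_neg hq1x, if_neg hq2x] at he
        exact hbij.injOn hq1 hq2 he
      · intro v hv
        have : v ∈ Set.Icc 1 l.sum := ⟨hv.1, by have hv2 := hv.2; rw [hsum]; omega⟩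
        obtain ⟨q, hq, hqv⟩ := hbij.surjOn this
        have hqx : q ≠ x := by
          intro he
          rw [he, hTx] at hqv
          have hv2 := hv.2; omega
        refine ⟨q, ⟨hq, by simpa using hqx⟩, ?_⟩
        simp only [if_neg hqx]
        exact hqv
    · intro p1 hp1 p2 hp2 he hlt
      rw [hcells] at hp1 hp2
      simp only [if_neg (show p1 ≠ x from by simpa using hp1.2),
        if_neg (show p2 ≠ x from by simpa using hp2.2)]
      exact hcol p1 hp1.1 p2 hp2.1 he hlt
    · intro p1 hp1 p2 hp2 he hlt
      rw [hcells] at hp1 hp2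
      simp only [if_neg (show p1 ≠ x from by simpa using hp1.2),
        if_neg (show p2 ≠ x from by simpa using hp2.2)]
      exact hrow p1 hp1.1 p2 hp2.1 he hlt
    · intro q hq
      rw [hcells] at hq
      by_cases hqx : q = x
      · simp only [if_pos hqx]
      · simp only [if_neg hqx]
        apply hzero
        intro hql
        exact hq ⟨hql, by simpa using hqx⟩
  · -- Bcol condition
    rcases Nat.eq_zero_or_pos c with h0 | hcpos
    · exact Or.inl h0
    · right
      show (delShape c l).getD c 0 < (delShape c l).getD (c - 1) 0
      rw [getD_delShape c h1 h2, getD_delShape c h1 h2, if_pos rfl, if_neg (by omega)]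
      have : l.getD c 0 ≤ l.getD (c - 1) 0 := getD_anti hsort (by omega)
      omega

lemma del_facts {s m c : ℕ} {p : List ℕ × (ℕ × ℕ → ℕ)}
    (hp : p ∈ Acol s (m + 1) c) :
    0 < p.1.getD c 0 ∧ (p.1.getD c 0 = 1 → p.1.length = c + 1) ∧
      p.2 (c, p.1.getD c 0 - 1) = m + 1 := by
  obtain ⟨l, T⟩ := p
  obtain ⟨⟨hlen, hsort, hpos, hsum, hsyt⟩, ⟨r, hr⟩⟩ := hp
  obtain ⟨hbij, hcol, hrow, hzero⟩ := hsyt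
  dsimp only at hlen hsort hpos hsum hbij hcol hrow hzero hr ⊢
  have hTle : ∀ q ∈ Cells l, T q ∈ Set.Icc 1 l.sum := hbij.mapsTo
  have hrc : ((c, r) : ℕ × ℕ) ∈ Cells l := by
    by_contra h
    rw [hzero _ h] at hr; omega
  have hcl : c < l.length := hrc.1
  have hrlt : r < l.getD c 0 := hrc.2
  have hr_eq : r = l.getD c 0 - 1 := by
    by_contra h
    have h' : r + 1 < l.getD c 0 := by omega
    have hcell2 : ((c, r + 1) : ℕ × ℕ) ∈ Cells l := ⟨hcl, h'⟩
    have := hcol (c, r) hrc (c, r + 1) hcell2 rfl (by omega)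
    have h2 := (hTle _ hcell2).2
    rw [hr, hsum] at *
    omega
  have hcorner : l.getD (c + 1) 0 < l.getD c 0 := by
    by_contra h
    push_neg at h
    have hcell2 : ((c + 1, r) : ℕ × ℕ) ∈ Cells l := by
      rw [cells_eq hpos]
      exact lt_of_lt_of_le hrlt h
    have := hrow (c, r) hrc (c + 1, r) hcell2 rfl (by omega)
    have h2 := (hTle _ hcell2).2
    rw [hr, hsum] at *
    omega
  refine ⟨by omega, ?_, by rw [← hr_eq]; exact hr⟩
  intro he
  by_contra hne
  have hlt : c + 1 < l.length := by omega
  have : 0 < l.getD (c + 1) 0 := by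
    rw [List.getD_eq_getElem _ _ hlt]
    exact hpos _ (List.getElem_mem hlt)
  omega

lemma del_add {s m c : ℕ} {p : List ℕ × (ℕ × ℕ → ℕ)}
    (hp : p ∈ Bcol s m c) : delT c (addT c p) = p := by
  have hc : c ≤ p.1.length := c_le_length hp
  obtain ⟨l, T⟩ := p
  obtain ⟨⟨hlen, hsort, hpos, hsum, hsyt⟩, hcond⟩ := hp
  obtain ⟨hbij, hcol, hrow, hzero⟩ := hsyt
  dsimp only at hlen hsort hpos hsum hbij hcol hrow hzero hcond hc
  have hA : (addShape c l).getD c 0 = l.getD c 0 + 1 := by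
    rw [getD_addShape c hc, if_pos rfl]
  have h1' : 0 < (addShape c l).getD c 0 := by omega
  have h2' : (addShape c l).getD c 0 = 1 → (addShape c l).length = c + 1 := by
    intro he
    rw [hA] at he
    have h0 : l.getD c 0 = 0 := by omega
    have : ¬ (c < l.length) := by
      intro hlt
      have := (getD_pos_iff hpos).2 hlt
      omega
    rw [length_addShape, if_neg this]
    omega
  refine Prod.ext ?_ ?_
  · show delShape c (addShape c l) = l
    refine list_ext_of_getD (pos_delShape c (pos_addShape c hpos) h1' h2') hpos ?_
    intro k
    rw [getD_delShape c h1' h2', getD_addShape c hc]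
    by_cases hk : k = c <;> simp [hk]
  · show (fun q => if q = (c, (addShape c l).getD c 0 - 1) then 0
        else if q = (c, l.getD c 0) then l.sum + 1 else T q) = T
    funext q
    rw [hA, Nat.add_sub_cancel]
    by_cases hq : q = (c, l.getD c 0)
    · rw [if_pos hq, hq]
      have : ((c, l.getD c 0) : ℕ × ℕ) ∉ Cells l := by
        rw [cells_eq hpos]; simp
      rw [hzero _ this]
    · rw [if_neg hq, if_neg hq]

lemma add_del {s m c : ℕ} {p : List ℕ × (ℕ × ℕ → ℕ)}
    (hp : p ∈ Acol s (m + 1) c) : addT c (delT c p) = p := by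
  obtain ⟨h1, h2, hTx⟩ := del_facts hp
  obtain ⟨l, T⟩ := p
  obtain ⟨⟨hlen, hsort, hpos, hsum, hsyt⟩, -⟩ := hp
  obtain ⟨hbij, hcol, hrow, hzero⟩ := hsyt
  dsimp only at hlen hsort hpos hsum hbij hcol hrow hzero h1 h2 hTx
  have hcl : c < l.length := by
    by_contra h
    rw [List.getD_eq_default _ _ (by omega)] at h1; omega
  have hc' : c ≤ (delShape c l).length := by
    rw [length_delShape c h1]
    split <;> omega
  have hD : (delShape c l).getD c 0 = l.getD c 0 - 1 := by
    rw [getD_delShape c h1 h2, if_pos rfl]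
  have hsum' : (delShape c l).sum + 1 = l.sum := sum_delShape c h1 h2
  refine Prod.ext ?_ ?_
  · show addShape c (delShape c l) = l
    refine list_ext_of_getD (pos_addShape c (pos_delShape c hpos h1 h2)) hpos ?_
    intro k
    rw [getD_addShape c hc', getD_delShape c h1 h2]
    by_cases hk : k = c
    · subst hk; rw [if_pos rfl]; omega
    · simp only [if_neg hk]; omega
  · show (fun q => if q = (c, (delShape c l).getD c 0) then (delShape c l).sum + 1
        else if q = (c, l.getD c 0 - 1) then 0 else T q) = T
    funext q
    rw [hD]
    by_cases hq : q = (c, l.getD c 0 - 1)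
    · rw [if_pos hq, hq, hTx, hsum', hsum]
    · rw [if_neg hq, if_neg hq]

lemma bijOn_master {s m c : ℕ} (hcs : c < s) :
    Set.BijOn (addT c) (Bcol s m c) (Acol s (m + 1) c) := by
  refine ⟨fun p hp => mem_add hcs hp, ?_, ?_⟩
  · intro p hp q hq he
    have := del_add hp
    rw [← this, he, del_add hq]
  · intro a ha
    exact ⟨delT c a, mem_del ha, add_del ha⟩

lemma bijOn_refined {s m c : ℕ} (hcs : c < s) (P Q : List ℕ × (ℕ × ℕ → ℕ) → Prop)
    (hPQ : ∀ p ∈ Bcol s m c, (Q (addT c p) ↔ P p)) :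
    Set.BijOn (addT c) {p | p ∈ Bcol s m c ∧ P p} {p | p ∈ Acol s (m + 1) c ∧ Q p} := by
  have hM := bijOn_master (s := s) (m := m) hcs
  refine ⟨?_, ?_, ?_⟩
  · rintro p ⟨hp, hP⟩
    exact ⟨mem_add hcs hp, (hPQ p hp).2 hP⟩
  · intro p hp q hq he
    exact hM.injOn hp.1 hq.1 he
  · rintro a ⟨ha, hQ⟩
    refine ⟨delT c a, ⟨mem_del ha, ?_⟩, add_del ha⟩
    rw [← hPQ _ (mem_del ha), add_del ha]
    exact hQ

lemma getD_addT {s m c : ℕ} {p : List ℕ × (ℕ × ℕ → ℕ)} (hp : p ∈ Bcol s m c) (k : ℕ) :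
    (addT c p).1.getD k 0 = p.1.getD k 0 + (if k = c then 1 else 0) :=
  getD_addShape c (c_le_length hp) k

/-- tableaux in `Y s n i` whose maximal entry lies in column `c` -/
def Ycol (s n i c : ℕ) : Set (List ℕ × (ℕ × ℕ → ℕ)) :=
  {p | p ∈ Y s n i ∧ ∃ r, p.2 (c, r) = n}

lemma mem_Y_iff {s n i : ℕ} {p : List ℕ × (ℕ × ℕ → ℕ)} :
    p ∈ Y s n i ↔ p ∈ Ys s n ∧ p.1.getD 1 0 - p.1.getD 2 0 = i := by
  constructor
  · rintro ⟨h1, h2, h3, h4, h5, h6⟩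
    exact ⟨⟨h1, h2, h3, h4, h6⟩, h5⟩
  · rintro ⟨⟨h1, h2, h3, h4, h6⟩, h5⟩
    exact ⟨h1, h2, h3, h4, h5, h6⟩

lemma Ycol_eq {s n i c : ℕ} :
    Ycol s n i c = {p | p ∈ Acol s n c ∧ p.1.getD 1 0 - p.1.getD 2 0 = i} := by
  ext p
  simp only [Ycol, Acol, Set.mem_setOf_eq, mem_Y_iff]
  tauto

lemma length_le_sum {l : List ℕ} (hpos : ∀ x ∈ l, 0 < x) : l.length ≤ l.sum := by
  induction l with
  | nil => simp
  | cons a t ih =>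
    simp only [List.length_cons, List.sum_cons]
    have ha : 0 < a := hpos a List.mem_cons_self
    have := ih (fun x hx => hpos x (List.mem_cons_of_mem a hx))
    omega

lemma T_le {s n : ℕ} {p : List ℕ × (ℕ × ℕ → ℕ)} (hp : p ∈ Ys s n) (q : ℕ × ℕ) :
    p.2 q ≤ n := by
  obtain ⟨-, -, -, hsum, hbij, -, -, hzero⟩ := hp
  by_cases hq : q ∈ Cells p.1
  · have := (hbij.mapsTo hq).2
    omega
  · rw [hzero q hq]
    exact Nat.zero_le _

lemma finite_Ys (s n : ℕ) : (Ys s n).Finite := by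
  rw [← Set.finite_coe_iff]
  have key : ∀ A ∈ Ys s n, ∀ B ∈ Ys s n, A.2 = B.2 → ∀ k, A.1.getD k 0 ≤ B.1.getD k 0 := by
    intro A hA B hB hT k
    by_contra h
    push_neg at h
    have hposA : ∀ x ∈ A.1, 0 < x := hA.2.2.1
    have hposB : ∀ x ∈ B.1, 0 < x := hB.2.2.1
    have hcellA : ((k, B.1.getD k 0) : ℕ × ℕ) ∈ Cells A.1 := by
      rw [cells_eq hposA]; exact h
    have hncellB : ((k, B.1.getD k 0) : ℕ × ℕ) ∉ Cells B.1 := by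
      rw [cells_eq hposB]; simp
    have h1 := (hA.2.2.2.2.1.mapsTo hcellA).1
    have h2 := hB.2.2.2.2.2.2.2 _ hncellB
    rw [hT, h2] at h1
    omega
  apply Finite.of_injective
    (fun p : ↥(Ys s n) => (fun a : Fin (n+1) × Fin (n+1) =>
      (⟨p.1.2 (a.1, a.2), Nat.lt_succ_of_le (le_trans (T_le p.2 _) (Nat.le_succ n))⟩ : Fin (n+2))))
  intro A B he
  have hTeq : A.1.2 = B.1.2 := by
    funext q
    by_cases hq : q.1 ≤ n ∧ q.2 ≤ n
    · have := congrFun he (⟨q.1, by omega⟩, ⟨q.2, by omega⟩)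
      simp only [Fin.mk.injEq] at this
      simpa using this
    · have hbound : ∀ {p : List ℕ × (ℕ × ℕ → ℕ)}, p ∈ Ys s n → p.2 q = 0 := by
        intro p hp
        obtain ⟨hlen, hsort, hpos, hsum, hbij, hcol, hrow, hzero⟩ := hp
        apply hzero
        rw [cells_eq hpos]
        simp only [Set.mem_setOf_eq, not_lt]
        have h1 : p.1.getD q.1 0 ≤ n := by rw [← hsum]; exact getD_le_sum _ _
        have h2 : p.1.length ≤ n := by rw [← hsum]; exact length_le_sum hpos
        push_neg at hq
        rcases Nat.lt_or_ge q.1 (p.1.length) with hh | hh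
        · -- then q.1 ≤ n so q.2 > n
          have hq1 : q.1 ≤ n := le_trans (le_of_lt hh) h2
          have hq2 : n < q.2 := hq hq1
          omega
        · rw [List.getD_eq_default _ _ hh]
          exact Nat.zero_le _
      rw [hbound A.2, hbound B.2]
  refine Subtype.ext (Prod.ext ?_ hTeq)
  exact list_ext_of_getD A.2.2.2.1 B.2.2.2.1
    (fun k => le_antisymm (key _ A.2 _ B.2 hTeq k) (key _ B.2 _ A.2 hTeq.symm k))

lemma finite_subY {s n : ℕ} {S : Set (List ℕ × (ℕ × ℕ → ℕ))}
    (h : ∀ p ∈ S, p ∈ Ys s n) : S.Finite :=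
  (finite_Ys s n).subset h

lemma card_split {S : Set (List ℕ × (ℕ × ℕ → ℕ))} (hS : S.Finite)
    (cond : List ℕ × (ℕ × ℕ → ℕ) → Prop) :
    Nat.card {p | p ∈ S ∧ cond p} + Nat.card {p | p ∈ S ∧ ¬ cond p} = Nat.card S := by
  classical
  have h1 : Finite ↥{p | p ∈ S ∧ cond p} :=
    Set.finite_coe_iff.2 (hS.subset (fun p hp => hp.1))
  have h2 : Finite ↥{p | p ∈ S ∧ ¬ cond p} :=
    Set.finite_coe_iff.2 (hS.subset (fun p hp => hp.1))
  rw [← Nat.card_sum]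
  apply Nat.card_congr
  exact (Equiv.sumCongr (Equiv.subtypeSubtypeEquivSubtypeInter (· ∈ S) cond).symm
    (Equiv.subtypeSubtypeEquivSubtypeInter (· ∈ S) (fun p => ¬ cond p)).symm).trans
    (Equiv.sumCompl _)

lemma card_sigma_fin {k : ℕ} (f : Fin k → Type) [hf : ∀ i, Finite (f i)] :
    Nat.card ((i : Fin k) × f i) = ∑ i : Fin k, Nat.card (f i) := by
  classical
  letI : ∀ i, Fintype (f i) := fun i => Fintype.ofFinite _
  rw [Nat.card_eq_fintype_card, Fintype.card_sigma]
  exact Finset.sum_congr rfl (fun i _ => (Nat.card_eq_fintype_card).symm)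

lemma maxcell_unique {s n i : ℕ} {p : List ℕ × (ℕ × ℕ → ℕ)} (hn : 1 ≤ n)
    (hp : p ∈ Y s n i) {c r c' r' : ℕ} (hr : p.2 (c, r) = n) (hr' : p.2 (c', r') = n) :
    c = c' := by
  obtain ⟨hlen, hsort, hpos, hsum, hdiff, hbij, hcol, hrow, hzero⟩ := hp
  have hc1 : ((c, r) : ℕ × ℕ) ∈ Cells p.1 := by
    by_contra h; rw [hzero _ h] at hr; omega
  have hc2 : ((c', r') : ℕ × ℕ) ∈ Cells p.1 := by
    by_contra h; rw [hzero _ h] at hr'; omega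
  have := hbij.injOn hc1 hc2 (by rw [hr, hr'])
  exact congrArg Prod.fst this

lemma card_Y_partition {s n i : ℕ} (hn : 1 ≤ n) :
    Nat.card (Y s n i) = ∑ c ∈ Finset.range s, Nat.card (Ycol s n i c) := by
  have hG : Function.Bijective
      (fun x : (c : Fin s) × ↥(Ycol s n i c) => (⟨x.2.1, x.2.2.1⟩ : ↥(Y s n i))) := by
    constructor
    · rintro ⟨⟨c, hc⟩, ⟨p, hp⟩⟩ ⟨⟨c', hc'⟩, ⟨p', hp'⟩⟩ he
      have hpv : p = p' := congrArg Subtype.val he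
      subst hpv
      obtain ⟨r, hr⟩ := hp.2
      obtain ⟨r', hr'⟩ := hp'.2
      have hcc : c = c' := maxcell_unique hn hp.1 hr hr'
      subst hcc
      rfl
    · rintro ⟨p, hp⟩
      have hsyt := hp.2.2.2.2.2
      have hnmem : n ∈ Set.Icc 1 p.1.sum := by
        rw [hp.2.2.2.1]; exact ⟨hn, le_rfl⟩
      obtain ⟨q, hq, hqn⟩ := hsyt.1.2.2 hnmem
      have hcs : q.1 < s := lt_of_lt_of_le hq.1 hp.1
      refine ⟨⟨⟨q.1, hcs⟩, ⟨p, hp, ⟨q.2, ?_⟩⟩⟩, rfl⟩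
      rw [Prod.mk.eta]
      exact hqn
  have hfin : ∀ c : Fin s, Finite ↥(Ycol s n i (c : ℕ)) := fun c =>
    Set.finite_coe_iff.2 (finite_subY (s := s) (n := n)
      (fun p hp => (mem_Y_iff.1 hp.1).1))
  rw [← Nat.card_eq_of_bijective _ hG, card_sigma_fin]
  exact Fin.sum_univ_eq_sum_range (fun c => Nat.card ↥(Ycol s n i c)) s

lemma card_col {s m c i : ℕ} (hcs : c < s) (i' : ℕ)
    (hiff : ∀ p ∈ Bcol s m c, ((addT c p).1.getD 1 0 - (addT c p).1.getD 2 0 = i ↔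
      p.1.getD 1 0 - p.1.getD 2 0 = i')) :
    Nat.card (Ycol s (m + 1) i c) =
      Nat.card {p | p ∈ Bcol s m c ∧ p.1.getD 1 0 - p.1.getD 2 0 = i'} := by
  rw [Ycol_eq]
  exact (Nat.card_congr (Set.BijOn.equiv _ (bijOn_refined hcs _ _ hiff))).symm

lemma sorted_getD_le {s m : ℕ} {p : List ℕ × (ℕ × ℕ → ℕ)} (hp : p ∈ Ys s m)
    {a b : ℕ} (hab : a ≤ b) : p.1.getD b 0 ≤ p.1.getD a 0 :=
  getD_anti hp.2.1 hab

lemma card_col0 {s m i : ℕ} (hs : 0 < s) :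
    Nat.card (Ycol s (m + 1) i 0) = Nat.card (Y s m i) := by
  have hset : {p | p ∈ Bcol s m 0 ∧ p.1.getD 1 0 - p.1.getD 2 0 = i} = Y s m i := by
    ext p
    simp only [Set.mem_setOf_eq, Bcol, mem_Y_iff]
    tauto
  rw [card_col hs i ?_, hset]
  intro p hp
  rw [getD_addT hp 1, getD_addT hp 2]
  norm_num

lemma card_col1 {s m i : ℕ} (hs : 1 < s) (hi : 1 ≤ i) :
    Nat.card (Ycol s (m + 1) i 1) + rj s 1 m (i - 1) = Nat.card (Y s m (i - 1)) := by
  have hset : {p | p ∈ Bcol s m 1 ∧ p.1.getD 1 0 - p.1.getD 2 0 = i - 1} =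
      {p | p ∈ Y s m (i - 1) ∧ p.1.getD 1 0 < p.1.getD 0 0} := by
    ext p
    simp only [Set.mem_setOf_eq, Bcol, mem_Y_iff]
    constructor
    · rintro ⟨⟨hY, hc⟩, hd⟩
      refine ⟨⟨hY, hd⟩, ?_⟩
      rcases hc with h | h
      · omega
      · exact h
    · rintro ⟨⟨hY, hd⟩, hc⟩
      exact ⟨⟨hY, Or.inr hc⟩, hd⟩
  have hrj : rj s 1 m (i - 1) =
      Nat.card {p | p ∈ Y s m (i - 1) ∧ ¬ (p.1.getD 1 0 < p.1.getD 0 0)} := by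
    unfold rj
    apply Nat.card_congr
    apply Equiv.subtypeEquiv (Equiv.refl _)
    intro p
    simp only [Equiv.refl_apply, Set.mem_setOf_eq]
    constructor
    · rintro ⟨hY, he⟩
      have he' : p.1.getD 0 0 = p.1.getD 1 0 := he
      exact ⟨hY, by omega⟩
    · rintro ⟨hY, he⟩
      have hle := sorted_getD_le (mem_Y_iff.1 hY).1 (show (0:ℕ) ≤ 1 by norm_num)
      exact ⟨hY, show p.1.getD 0 0 = p.1.getD 1 0 by omega⟩
  rw [card_col hs (i - 1) ?_, hset, hrj]
  · exact card_split (finite_subY (fun p hp => (mem_Y_iff.1 hp).1)) _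
  · intro p hp
    rw [getD_addT hp 1, getD_addT hp 2]
    have h21 := sorted_getD_le hp.1 (show (1:ℕ) ≤ 2 by norm_num)
    rw [if_pos rfl, if_neg (show ¬((2:ℕ) = 1) by omega)]
    omega

lemma card_col2 {s m i : ℕ} (hs : 2 < s) (hi : 1 ≤ i) :
    Nat.card (Ycol s (m + 1) i 2) = Nat.card (Y s m (i + 1)) := by
  have hset : {p | p ∈ Bcol s m 2 ∧ p.1.getD 1 0 - p.1.getD 2 0 = i + 1} = Y s m (i + 1) := by
    ext p
    simp only [Set.mem_setOf_eq, Bcol, mem_Y_iff]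
    constructor
    · rintro ⟨⟨hY, hc⟩, hd⟩
      exact ⟨hY, hd⟩
    · rintro ⟨hY, hd⟩
      refine ⟨⟨hY, Or.inr ?_⟩, hd⟩
      show p.1.getD 2 0 < p.1.getD 1 0
      omega
  rw [card_col hs (i + 1) ?_, hset]
  intro p hp
  rw [getD_addT hp 1, getD_addT hp 2]
  have hc : p.1.getD 2 0 < p.1.getD 1 0 := by
    rcases hp.2 with h | h
    · omega
    · exact h
  rw [if_neg (show ¬((1:ℕ) = 2) by omega), if_pos rfl]
  omega

lemma card_colc {s m i c : ℕ} (hcs : c < s) (hc3 : 3 ≤ c) :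
    Nat.card (Ycol s (m + 1) i c) + rj s c m i = Nat.card (Y s m i) := by
  have hset : {p | p ∈ Bcol s m c ∧ p.1.getD 1 0 - p.1.getD 2 0 = i} =
      {p | p ∈ Y s m i ∧ p.1.getD c 0 < p.1.getD (c - 1) 0} := by
    ext p
    simp only [Set.mem_setOf_eq, Bcol, mem_Y_iff]
    constructor
    · rintro ⟨⟨hY, hc'⟩, hd⟩
      refine ⟨⟨hY, hd⟩, ?_⟩
      rcases hc' with h | h
      · omega
      · exact h
    · rintro ⟨⟨hY, hd⟩, hc'⟩
      exact ⟨⟨hY, Or.inr hc'⟩, hd⟩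
  have hrj : rj s c m i =
      Nat.card {p | p ∈ Y s m i ∧ ¬ (p.1.getD c 0 < p.1.getD (c - 1) 0)} := by
    unfold rj
    apply Nat.card_congr
    apply Equiv.subtypeEquiv (Equiv.refl _)
    intro p
    simp only [Equiv.refl_apply, Set.mem_setOf_eq]
    constructor
    · rintro ⟨hY, he⟩
      exact ⟨hY, by omega⟩
    · rintro ⟨hY, he⟩
      have := sorted_getD_le (mem_Y_iff.1 hY).1 (show c - 1 ≤ c by omega)
      exact ⟨hY, by omega⟩
  rw [card_col hcs i ?_, hset, hrj]
  · exact card_split (finite_subY (fun p hp => (mem_Y_iff.1 hp).1)) _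
  · intro p hp
    rw [getD_addT hp 1, getD_addT hp 2]
    rw [if_neg (show ¬(1 = c) by omega), if_neg (show ¬(2 = c) by omega)]
    omega

end C

end S14

open S14

theorem stmt14 (s n i : ℕ) (hs : 4 ≤ s) (hn : s ≤ n) (hi : 1 ≤ i) (hi' : i ≤ n / 2) :
    gamma s n i + rj s 1 (n - 1) (i - 1) +
        (∑ j ∈ Finset.Icc 3 (s - 1), rj s j (n - 1) i) =
      gamma s (n - 1) (i - 1) + (s - 2) * gamma s (n - 1) i +
        gamma s (n - 1) (i + 1) := by
  obtain ⟨m, rfl⟩ : ∃ m, n = m + 1 := ⟨n - 1, by omega⟩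
  simp only [Nat.add_sub_cancel]
  set g := Nat.card (Y s m i) with hg
  set gm := Nat.card (Y s m (i - 1)) with hgm
  set gp := Nat.card (Y s m (i + 1)) with hgp
  have e2 : Nat.card (Ycol s (m + 1) i 0) = g := card_col0 (by omega)
  have e3 : Nat.card (Ycol s (m + 1) i 1) + rj s 1 m (i - 1) = gm := card_col1 (by omega) hi
  have e4 : Nat.card (Ycol s (m + 1) i 2) = gp := card_col2 (by omega) hi
  have hIccIco : Finset.Icc 3 (s - 1) = Finset.Ico 3 s := by
    rw [← Finset.Ico_add_one_right_eq_Icc]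
    congr 1
    omega
  have e5 : (∑ c ∈ Finset.Ico 3 s, Nat.card (Ycol s (m + 1) i c)) +
      (∑ c ∈ Finset.Ico 3 s, rj s c m i) = (s - 3) * g := by
    rw [← Finset.sum_add_distrib]
    rw [Finset.sum_congr rfl (fun c hc => card_colc (Finset.mem_Ico.1 hc).2 (Finset.mem_Ico.1 hc).1)]
    rw [Finset.sum_const, Nat.card_Ico, smul_eq_mul]
  have e1 : gamma s (m + 1) i = Nat.card (Ycol s (m + 1) i 0) + Nat.card (Ycol s (m + 1) i 1) +
      Nat.card (Ycol s (m + 1) i 2) + ∑ c ∈ Finset.Ico 3 s, Nat.card (Ycol s (m + 1) i c) := by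
    show Nat.card (Y s (m + 1) i) = _
    rw [card_Y_partition (by omega), Finset.range_eq_Ico,
      ← Finset.sum_Ico_consecutive _ (Nat.zero_le 3) (by omega : 3 ≤ s),
      ← Finset.range_eq_Ico]
    rw [Finset.sum_range_succ, Finset.sum_range_succ, Finset.sum_range_one]
  have hmul : (s - 2) * g = (s - 3) * g + g := by
    have h : s - 2 = (s - 3) + 1 := by omega
    rw [h, add_mul, one_mul]
  have hgam : gamma s m (i - 1) = gm := rfl
  have hgam2 : gamma s m i = g := rfl
  have hgam3 : gamma s m (i + 1) = gp := rfl
  rw [hIccIco, e1, hgam, hgam2, hgam3, hmul]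
  omega
end

section
/- The Motzkin numbers satisfy M_n < 3·M_{n−1} for all n ≥ 1, and lim_{n→∞} M_n/M_{n−1} = 3. -/
open Filter Topology

/-- The Motzkin numbers: `M 0 = 1`, `M 1 = 1`,
`M (n+1) = M n + ∑_{k=0}^{n-1} M k * M (n-1-k)`. -/
def motzkin : ℕ → ℕ
  | 0 => 1
  | n + 1 =>
    motzkin n + ∑ k ∈ (Finset.range n).attach,
      motzkin k.1 * motzkin (n - 1 - k.1)
decreasing_by
  · omega
  · have := k.2; simp only [Finset.mem_range] at this; omega
  · omega

lemma motzkin_succ (n : ℕ) :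
    motzkin (n + 1) = motzkin n + ∑ k ∈ Finset.range n, motzkin k * motzkin (n - 1 - k) := by
  rw [motzkin]
  congr 1
  exact Finset.sum_attach (Finset.range n) (fun k => motzkin k * motzkin (n - 1 - k))

lemma motzkin_zero : motzkin 0 = 1 := by rw [motzkin]

lemma motzkin_one : motzkin 1 = 1 := by
  rw [motzkin_succ]; simp [motzkin_zero]

lemma motzkin_two : motzkin 2 = 2 := by
  rw [motzkin_succ]
  simp [Finset.sum_range_succ, motzkin_one, motzkin_zero]

lemma motzkin_pos (n : ℕ) : 0 < motzkin n := by
  induction n with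
  | zero => simp [motzkin_zero]
  | succ n ih => rw [motzkin_succ]; exact lt_of_lt_of_le ih (Nat.le_add_right _ _)

section PS

open PowerSeries

/-- The generating function of the Motzkin numbers, over `ℚ`. -/
noncomputable def Fm : PowerSeries ℚ := PowerSeries.mk fun n => (motzkin n : ℚ)

/-- Its formal derivative. -/
noncomputable def Gm : PowerSeries ℚ := PowerSeries.derivative ℚ Fm

lemma hFm : Fm = 1 + X * Fm + X ^ 2 * (Fm * Fm) := by
  ext n
  simp only [map_add, coeff_X_pow_mul']
  match n with
  | 0 =>
    rw [coeff_zero_X_mul]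
    simp [Fm, motzkin]
  | 1 =>
    rw [coeff_succ_X_mul]
    norm_num [Fm, coeff_one, motzkin]
    simp
  | (n+2) =>
    rw [coeff_succ_X_mul]
    rw [if_pos (by omega : 2 ≤ n + 2)]
    have h2 : n + 2 - 2 = n := by omega
    rw [h2, coeff_one, if_neg (by omega), coeff_mul]
    rw [Finset.Nat.sum_antidiagonal_eq_sum_range_succ
      (fun i j => (coeff i) Fm * (coeff j) Fm) n]
    simp only [Fm, coeff_mk, zero_add]
    rw [show (motzkin (n+2) : ℚ) = ((motzkin (n+1) : ℚ)
        + (∑ k ∈ Finset.range (n+1), (motzkin k : ℚ) * (motzkin (n - k) : ℚ))) from ?_]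
    rw [motzkin_succ (n+1)]
    push_cast
    congr 1

lemma hGm : Gm = X * Gm + Fm + (X^2 * (Fm * Gm + Fm * Gm) + (Fm * Fm) * (2 * X)) := by
  have h : PowerSeries.derivative ℚ Fm
      = PowerSeries.derivative ℚ (1 + X * Fm + X ^ 2 * (Fm * Fm)) := by rw [← hFm]
  simp only [map_add, Derivation.leibniz, Derivation.leibniz_pow, derivative_X,
    map_one, smul_eq_mul, Derivation.map_one_eq_zero, nsmul_eq_mul, Nat.cast_ofNat] at h
  simp only [Gm]
  linear_combination h

/-- The key algebraic identity `x(1-2x-3x²)F' + (2-3x-3x²)F = 2`, written without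
numerals multiplying power series. -/
lemma hT2 : X * Gm + Fm + Fm
    = 1 + 1 + X^2 * Gm + X^2 * Gm + X^3 * Gm + X^3 * Gm + X^3 * Gm
      + X * Fm + X * Fm + X * Fm + X^2 * Fm + X^2 * Fm + X^2 * Fm := by
  linear_combination (-(X * (2*X^2*Fm + X - 1))) * hGm
    + (4*X^3*Gm + 4*X^2*Fm + 2) * hFm

lemma coeff_Gm (m : ℕ) : (coeff m) Gm = ((m : ℚ) + 1) * motzkin (m+1) := by
  rw [Gm, coeff_derivative]
  simp only [Fm, coeff_mk]
  ring

lemma coeff_Fm (m : ℕ) : (coeff m) Fm = (motzkin m : ℚ) := by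
  simp [Fm]

/-- The D-finite recurrence `(n+2)Mₙ = (2n+1)Mₙ₋₁ + 3(n-1)Mₙ₋₂`, over `ℚ`. -/
lemma mrecQ (n : ℕ) : ((n:ℚ) + 5) * motzkin (n+3)
    = (2*(n:ℚ) + 7) * motzkin (n+2) + (3*(n:ℚ) + 6) * motzkin (n+1) := by
  have h := congrArg (coeff (n+3)) hT2
  simp only [map_add] at h
  rw [coeff_succ_X_mul, coeff_succ_X_mul] at h
  rw [coeff_X_pow_mul Gm 2 (n+1), coeff_X_pow_mul Gm 3 n,
      coeff_X_pow_mul Fm 2 (n+1)] at h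
  rw [coeff_Gm, coeff_Gm, coeff_Gm, coeff_Fm, coeff_Fm, coeff_Fm, coeff_one] at h
  rw [if_neg (by omega)] at h
  push_cast at h
  linarith

end PS

/-- The D-finite recurrence, in `ℕ`. -/
lemma mrecN (n : ℕ) :
    (n+4) * motzkin (n+2) = (2*n+5) * motzkin (n+1) + (3*n+3) * motzkin n := by
  cases n with
  | zero => rw [motzkin_two, motzkin_one, motzkin_zero]
  | succ m =>
    have h := mrecQ m
    have h2 : (((m+1+4 : ℕ) * motzkin (m+1+2) : ℕ) : ℚ)
        = (((2*(m+1)+5) * motzkin (m+1+1) + (3*(m+1)+3) * motzkin (m+1) : ℕ) : ℚ) := by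
      push_cast at h ⊢
      ring_nf
      ring_nf at h
      linarith
    exact_mod_cast h2

lemma key (n : ℕ) : motzkin (n+1) < 3 * motzkin n
    ∧ 3*(n+1) * motzkin n ≤ (n+3) * motzkin (n+1) := by
  induction n with
  | zero => rw [motzkin_one, motzkin_zero]; omega
  | succ n ih =>
    obtain ⟨P, L⟩ := ih
    have hrec := mrecN n
    have pos := motzkin_pos (n+1)
    constructor
    · nlinarith [motzkin_pos (n+2)]
    · nlinarith [motzkin_pos n]

theorem stmt18 :
    (∀ n : ℕ, 1 ≤ n → motzkin n < 3 * motzkin (n - 1)) ∧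
    Tendsto (fun n : ℕ => (motzkin (n + 1) : ℝ) / (motzkin n : ℝ)) atTop (𝓝 3) := by
  constructor
  · rintro (_ | m) h
    · omega
    · exact (key m).1
  · have hlow : Tendsto (fun n : ℕ => 3 - 6 / ((n : ℝ) + 3)) atTop (𝓝 3) := by
      have h1 : Tendsto (fun n : ℕ => ((n : ℝ) + 3)) atTop atTop :=
        tendsto_atTop_add_const_right _ 3 tendsto_natCast_atTop_atTop
      have h2 : Tendsto (fun n : ℕ => 6 / ((n : ℝ) + 3)) atTop (𝓝 0) :=
        Tendsto.div_atTop tendsto_const_nhds h1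
      simpa using tendsto_const_nhds.sub h2
    apply tendsto_of_tendsto_of_tendsto_of_le_of_le hlow tendsto_const_nhds
    · intro n
      have L := (key n).2
      have hp : (0:ℝ) < motzkin n := by exact_mod_cast motzkin_pos n
      have hL : (3*((n:ℝ)+1)) * motzkin n ≤ ((n:ℝ)+3) * motzkin (n+1) := by
        exact_mod_cast L
      show (3:ℝ) - 6/((n:ℝ)+3) ≤ (motzkin (n+1) : ℝ) / (motzkin n : ℝ)
      rw [show (3 : ℝ) - 6/((n:ℝ)+3) = (3*((n:ℝ)+1))/((n:ℝ)+3) by field_simp; ring]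
      rw [div_le_div_iff₀ (by positivity) hp]
      nlinarith
    · intro n
      have P := (key n).1
      have hp : (0:ℝ) < motzkin n := by exact_mod_cast motzkin_pos n
      have hP : (motzkin (n+1) : ℝ) ≤ 3 * motzkin n := by
        have := P.le; exact_mod_cast this
      show (motzkin (n+1) : ℝ) / (motzkin n : ℝ) ≤ (3:ℝ)
      rw [div_le_iff₀ hp]
      linarith
end
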